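/- arXiv:2302.13204 — 8 statements merged into one kernel-verified Lean document; each statement's English description precedes it below -/
import Mathlib

section
/- For every complex number Z with Im Z = γ, the matrix M(Z) is Hermitian and satisfies the intertwining relation M(Z) H = H† M(Z), where H† denotes the conjugate transpose of H. -/
open Matrix Complex

/-- The `2m × 2m` tridiagonal Hamiltonian with diagonal entries `z 1, …, z n`
(1-based) and symmetric off-diagonal entries `t 1, …, t (n-1)`. -/
noncomputable def Hop (m : ℕ) (t : ℕ → ℝ) (z : ℕ → ℂ) :
    Matrix (Fin (2*m)) (Fin (2*m)) ℂ :=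
  fun i j =>
    if (i : ℕ) = (j : ℕ) then z ((i : ℕ) + 1)
    else if (i : ℕ) + 1 = (j : ℕ) then ((t ((i : ℕ) + 1) : ℝ) : ℂ)
    else if (j : ℕ) + 1 = (i : ℕ) then ((t ((j : ℕ) + 1) : ℝ) : ℂ)
    else 0

/-- The block matrix `M(Z) = [[1, (conj Z / t_m) P_m],[(Z / t_m) P_m, 1]]`. -/
noncomputable def Mop (m : ℕ) (t : ℕ → ℝ) (Z : ℂ) :
    Matrix (Fin (2*m)) (Fin (2*m)) ℂ :=
  fun i j =>
    if i = j then 1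
    else if (i : ℕ) + (j : ℕ) + 1 = 2*m then
      (if (i : ℕ) < m then (starRingEnd ℂ) Z / (t m : ℂ) else Z / (t m : ℂ))
    else 0

def sig (m : ℕ) (i : Fin (2*m)) : Fin (2*m) :=
  ⟨2*m - 1 - (i : ℕ), by have := i.isLt; omega⟩

lemma sig_val (m : ℕ) (i : Fin (2*m)) : (sig m i : ℕ) = 2*m - 1 - (i : ℕ) := rfl

lemma Mop_eq (m : ℕ) (t : ℕ → ℝ) (Z : ℂ) (i k : Fin (2*m)) :
    Mop m t Z i k = (if i = k then 1 else 0)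
      + (if (i : ℕ) + (k : ℕ) + 1 = 2*m then
          (if (i : ℕ) < m then (starRingEnd ℂ) Z / (t m : ℂ) else Z / (t m : ℂ)) else 0) := by
  have hik : i = k ↔ (i : ℕ) = (k : ℕ) := Fin.ext_iff
  unfold Mop
  split_ifs <;> simp_all <;> omega

lemma Mop_mul (m : ℕ) (t : ℕ → ℝ) (Z : ℂ) (A : Matrix (Fin (2*m)) (Fin (2*m)) ℂ)
    (i j : Fin (2*m)) :
    (Mop m t Z * A) i j = A i j
      + (if (i : ℕ) < m then (starRingEnd ℂ) Z / (t m : ℂ) else Z / (t m : ℂ)) * A (sig m i) j := by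
  rw [Matrix.mul_apply]
  have hcond : ∀ k : Fin (2*m), ((i : ℕ) + (k : ℕ) + 1 = 2*m) ↔ k = sig m i := by
    intro k
    rw [Fin.ext_iff, sig_val]
    have := i.isLt; have := k.isLt
    omega
  simp only [Mop_eq, add_mul, ite_mul, one_mul, zero_mul, Finset.sum_add_distrib, hcond]
  congr 1
  · rw [Finset.sum_ite_eq]; simp
  · rw [Finset.sum_ite_eq']; simp

lemma mul_Mop (m : ℕ) (t : ℕ → ℝ) (Z : ℂ) (A : Matrix (Fin (2*m)) (Fin (2*m)) ℂ)
    (i j : Fin (2*m)) :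
    (A * Mop m t Z) i j = A i j
      + A i (sig m j) * (if ((sig m j : ℕ)) < m then (starRingEnd ℂ) Z / (t m : ℂ) else Z / (t m : ℂ)) := by
  rw [Matrix.mul_apply]
  have hcond : ∀ k : Fin (2*m), ((k : ℕ) + (j : ℕ) + 1 = 2*m) ↔ k = sig m j := by
    intro k
    rw [Fin.ext_iff, sig_val]
    have := j.isLt; have := k.isLt
    omega
  simp only [Mop_eq, mul_add, mul_ite, mul_one, mul_zero, Finset.sum_add_distrib, hcond]
  congr 1
  · rw [Finset.sum_ite_eq']; simp
  · rw [Finset.sum_ite_eq']; simp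

lemma HopT (m : ℕ) (t : ℕ → ℝ) (z : ℕ → ℂ) :
    (Hop m t z)ᴴ = Hop m t (fun k => (starRingEnd ℂ) (z k)) := by
  ext i j
  simp only [conjTranspose_apply, Hop, star_def]
  split_ifs <;> simp_all [Complex.conj_ofReal] <;> omega

set_option maxHeartbeats 2000000 in
theorem stmt0 (m : ℕ) (hm : 1 ≤ m) (t : ℕ → ℝ) (z : ℕ → ℂ)
    (ht0 : ∀ j, 1 ≤ j → j ≤ 2*m - 1 → t j ≠ 0)
    (htsym : ∀ j, 1 ≤ j → j ≤ 2*m - 1 → t j = t (2*m - j))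
    (htm : 0 < t m)
    (hzreal : ∀ j, 1 ≤ j → j ≤ 2*m → j ≠ m → j ≠ m + 1 → (z j).im = 0)
    (hzsym : ∀ j, 1 ≤ j → j ≤ 2*m → z (2*m + 1 - j) = (starRingEnd ℂ) (z j))
    (hγ : 0 ≤ (z m).im)
    (Z : ℂ) (hZ : Z.im = (z m).im) :
    (Mop m t Z).IsHermitian ∧
      Mop m t Z * Hop m t z = (Hop m t z)ᴴ * Mop m t Z := by
  have hT : ((t m : ℝ) : ℂ) ≠ 0 := by
    exact_mod_cast htm.ne'
  constructor
  · ext i j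
    simp only [conjTranspose_apply, Mop, star_def, Fin.ext_iff]
    split_ifs <;>
      first
        | (exfalso; omega)
        | simp [map_div₀, Complex.conj_ofReal]
  · ext i j
    rw [Mop_mul, HopT, mul_Mop]
    have hi := i.isLt
    have hj := j.isLt
    simp only [Hop]; rw [sig_val, sig_val]
    have hzm : z m + (starRingEnd ℂ) Z = (starRingEnd ℂ) (z m) + Z := by
      have h1 := Complex.sub_conj (z m)
      have h2 := Complex.sub_conj Z
      rw [hZ] at h2
      have : z m - (starRingEnd ℂ) (z m) = Z - (starRingEnd ℂ) Z := by rw [h1, h2]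
      linear_combination this
    have hzm1 : z (m+1) = (starRingEnd ℂ) (z m) := by
      have := hzsym m hm (by omega)
      rwa [show 2*m + 1 - m = m + 1 by omega] at this
    have hzswap : ∀ a : ℕ, a + 1 ≤ 2*m → z (2*m - a) = (starRingEnd ℂ) (z (a+1)) := by
      intro a ha
      have := hzsym (a+1) (by omega) ha
      rwa [show 2*m + 1 - (a+1) = 2*m - a by omega] at this
    have hzr : ∀ a : ℕ, a < 2*m → a + 1 ≠ m → a + 1 ≠ m + 1 →
        (starRingEnd ℂ) (z (a+1)) = z (a+1) := by
      intro a ha h1 h2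
      rw [Complex.conj_eq_iff_im]
      exact hzreal (a+1) (by omega) (by omega) h1 h2
    split_ifs <;>
      first
        | (exfalso; omega)
        | ring1
        | (rw [hzr (i:ℕ) (by omega) (by omega) (by omega)]; ring1)
        | (rw [show 2*m-1-(i:ℕ)+1 = 2*m-(i:ℕ) by omega, hzswap (i:ℕ) (by omega)]; ring1)
        | (rw [show ((j:ℕ))+1 = 2*m-((i:ℕ)+1) by omega,
              ← htsym ((i:ℕ)+1) (by omega) (by omega)]; ring1)
        | (rw [show 2*m-1-(i:ℕ)+1 = (j:ℕ) by omega, show 2*m-1-(j:ℕ)+1 = (i:ℕ) by omega,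
              htsym (j:ℕ) (by omega) (by omega), show 2*m-(j:ℕ) = (i:ℕ) by omega]; ring1)
        | (rw [show ((j:ℕ))+1 = m by omega, show ((i:ℕ))+1 = m by omega]; field_simp;
            first
              | linear_combination hzm
              | linear_combination -hzm
              | linear_combination (↑(t m):ℂ) * hzm
              | linear_combination (-(↑(t m):ℂ)) * hzm)
        | (rw [show 2*m-1-(i:ℕ)+1 = m by omega, show 2*m-1-(j:ℕ)+1 = m by omega,
              show ((i:ℕ))+1 = m+1 by omega, hzm1, Complex.conj_conj]; field_simp;
            first
              | linear_combination hzm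
              | linear_combination -hzm
              | linear_combination (↑(t m):ℂ) * hzm
              | linear_combination (-(↑(t m):ℂ)) * hzm)
end

section
/- Let Z be a complex number with |Z| < t_m, set α = sqrt(1 + |Z|/t_m) + sqrt(1 − |Z|/t_m), and let Ω be the n×n block matrix (α/2)·1_n + (1/(α t_m))·[[0, conj(Z) P_m], [Z P_m, 0]]. Then Ω is Hermitian positive definite and Ω² = M(Z); that is, Ω is the unique positive definite square root of M(Z). -/
open Matrix Complex ComplexOrder

/-- The block matrix `Ω = (α/2)·1 + (1/(α t_m))·[[0, conj(Z) P_m],[Z P_m, 0]]`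
where `α = sqrt(1 + |Z|/t_m) + sqrt(1 − |Z|/t_m)`. -/
noncomputable def Om (m : ℕ) (t : ℕ → ℝ) (Z : ℂ) :
    Matrix (Fin (2*m)) (Fin (2*m)) ℂ :=
  fun i j =>
    if i = j then
      ((Real.sqrt (1 + ‖Z‖ / t m) + Real.sqrt (1 - ‖Z‖ / t m)) / 2 : ℝ)
    else if (i : ℕ) + (j : ℕ) + 1 = 2*m then
      (if (i : ℕ) < m then (starRingEnd ℂ) Z else Z) /
        (((Real.sqrt (1 + ‖Z‖ / t m) + Real.sqrt (1 - ‖Z‖ / t m)) : ℝ) * (t m : ℂ))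
    else 0

noncomputable def Bm (m : ℕ) (Z : ℂ) : Matrix (Fin (2*m)) (Fin (2*m)) ℂ :=
  fun i j => if (i:ℕ) + (j:ℕ) + 1 = 2*m then (if (i:ℕ) < m then (starRingEnd ℂ) Z else Z) else 0

lemma Bm_herm (m : ℕ) (Z : ℂ) : (Bm m Z)ᴴ = Bm m Z := by
  ext i j
  have hi := i.isLt
  have hj := j.isLt
  simp only [Bm, conjTranspose_apply]
  by_cases h : (i:ℕ) + (j:ℕ) + 1 = 2*m
  · have h' : (j:ℕ) + (i:ℕ) + 1 = 2*m := by omega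
    by_cases him : (i:ℕ) < m
    · have hjm : ¬ (j:ℕ) < m := by omega
      simp [h, h', him, hjm]
    · have hjm : (j:ℕ) < m := by omega
      simp [h, h', him, hjm]
  · have h' : ¬ ((j:ℕ) + (i:ℕ) + 1 = 2*m) := by omega
    simp [h, h']

lemma Bm_sq (m : ℕ) (Z : ℂ) :
    Bm m Z * Bm m Z = ((‖Z‖ ^ 2 : ℝ) : ℂ) • (1 : Matrix (Fin (2*m)) (Fin (2*m)) ℂ) := by
  ext i k
  have hi := i.isLt
  have hk := k.isLt
  rw [Matrix.mul_apply]
  have hj0 : 2*m - 1 - (i:ℕ) < 2*m := by omega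
  rw [Finset.sum_eq_single (⟨2*m - 1 - (i:ℕ), hj0⟩ : Fin (2*m))]
  · simp only [Bm]
    have h1 : (i:ℕ) + (2*m - 1 - (i:ℕ)) + 1 = 2*m := by omega
    simp only [h1, if_true]
    by_cases hik : (i:ℕ) = (k:ℕ)
    · have hik' : i = k := Fin.ext hik
      subst hik'
      have h2 : (2*m - 1 - (i:ℕ)) + (i:ℕ) + 1 = 2*m := by omega
      simp only [h2, if_true, Matrix.smul_apply, Matrix.one_apply_eq, smul_eq_mul, mul_one]
      by_cases him : (i:ℕ) < m
      · have h3 : ¬ (2*m - 1 - (i:ℕ)) < m := by omega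
        rw [if_pos him, if_neg h3]
        push_cast
        rw [mul_comm, Complex.mul_conj, ← Complex.sq_norm, Complex.ofReal_pow]
      · have h3 : (2*m - 1 - (i:ℕ)) < m := by omega
        rw [if_neg him, if_pos h3]
        push_cast
        rw [Complex.mul_conj, ← Complex.sq_norm, Complex.ofReal_pow]
    · have h2 : ¬ ((2*m - 1 - (i:ℕ)) + (k:ℕ) + 1 = 2*m) := by omega
      have hik' : i ≠ k := fun h => hik (congrArg Fin.val h)
      simp [h2, hik']
  · intro j _ hj
    have hjv : (j:ℕ) ≠ 2*m - 1 - (i:ℕ) := by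
      intro h; exact hj (Fin.ext h)
    have h1 : ¬ ((i:ℕ) + (j:ℕ) + 1 = 2*m) := by omega
    simp [Bm, h1]
  · intro h
    exact absurd (Finset.mem_univ _) h

lemma Om_decomp (m : ℕ) (t : ℕ → ℝ) (Z : ℂ) :
    Om m t Z = (((Real.sqrt (1 + ‖Z‖ / t m) + Real.sqrt (1 - ‖Z‖ / t m)) / 2 : ℝ) : ℂ) • 1 +
      ((((Real.sqrt (1 + ‖Z‖ / t m) + Real.sqrt (1 - ‖Z‖ / t m)) * t m)⁻¹ : ℝ) : ℂ) • Bm m Z := by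
  ext i j
  simp only [Om, Bm, Matrix.add_apply, Matrix.smul_apply, Matrix.one_apply, smul_eq_mul]
  by_cases hij : i = j
  · subst hij
    have h2 : ¬ ((i:ℕ) + (i:ℕ) + 1 = 2*m) := by omega
    simp [h2]
  · simp only [hij, if_false, mul_zero, zero_add]
    by_cases hc : (i:ℕ)+(j:ℕ)+1 = 2*m
    · simp only [hc, if_true]
      push_cast
      rw [div_eq_mul_inv, mul_comm]
    · simp [hc]

lemma Mop_decomp (m : ℕ) (t : ℕ → ℝ) (Z : ℂ) :
    Mop m t Z = 1 + ((((t m)⁻¹ : ℝ)) : ℂ) • Bm m Z := by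
  ext i j
  simp only [Mop, Bm, Matrix.add_apply, Matrix.smul_apply, Matrix.one_apply, smul_eq_mul]
  by_cases hij : i = j
  · subst hij
    have h2 : ¬ ((i:ℕ) + (i:ℕ) + 1 = 2*m) := by omega
    simp [h2]
  · simp only [hij, if_false, zero_add]
    by_cases hc : (i:ℕ)+(j:ℕ)+1 = 2*m
    · simp only [hc, if_true]
      push_cast
      split_ifs <;> rw [div_eq_mul_inv, mul_comm]
    · simp [hc]

lemma sq_decomp {n : Type*} [Fintype n] [DecidableEq n] (x y w : ℂ) (B : Matrix n n ℂ)
    (hB : B * B = w • 1) :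
    (x • 1 + y • B) * (x • 1 + y • B) =
      (x^2 + y^2 * w) • (1 : Matrix n n ℂ) + (2*(x*y)) • B := by
  simp only [add_mul, mul_add, smul_mul_assoc, mul_smul_comm, one_mul, mul_one, hB, smul_smul]
  module

lemma posdef_smul_one {n : Type*} [Fintype n] [DecidableEq n] {r : ℝ} (hr : 0 < r) :
    ((r : ℂ) • (1 : Matrix n n ℂ)).PosDef := by
  refine ⟨?_, fun x hx => ?_⟩
  · rw [Matrix.IsHermitian, conjTranspose_smul, conjTranspose_one]
    congr 1
    simp [Complex.star_def, Complex.conj_ofReal]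
  · have h2 : (0:ℂ) < (r:ℂ) := by exact_mod_cast hr
    exact (Matrix.PosDef.one.smul h2).2 hx

section
open scoped MatrixOrder

lemma psd_eq_of_sq {n : Type*} [Fintype n] [DecidableEq n] {A B : Matrix n n ℂ}
    (hA : A.PosSemidef) (hB : B.PosSemidef) (h : A ^ 2 = B ^ 2) : A = B :=
  (CFC.sq_eq_sq_iff A B hA.nonneg hB.nonneg).mp h

end

theorem stmt3 (m : ℕ) (hm : 1 ≤ m) (t : ℕ → ℝ) (z : ℕ → ℂ)
    (ht0 : ∀ j, 1 ≤ j → j ≤ 2*m - 1 → t j ≠ 0)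
    (htsym : ∀ j, 1 ≤ j → j ≤ 2*m - 1 → t j = t (2*m - j))
    (htm : 0 < t m)
    (hzreal : ∀ j, 1 ≤ j → j ≤ 2*m → j ≠ m → j ≠ m + 1 → (z j).im = 0)
    (hzsym : ∀ j, 1 ≤ j → j ≤ 2*m → z (2*m + 1 - j) = (starRingEnd ℂ) (z j))
    (hγ : 0 ≤ (z m).im)
    (Z : ℂ) (hZ : ‖Z‖ < t m) :
    (Om m t Z).IsHermitian ∧ (Om m t Z).PosDef ∧
      Om m t Z * Om m t Z = Mop m t Z ∧
      (∀ Ω' : Matrix (Fin (2*m)) (Fin (2*m)) ℂ,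
        Ω'.PosDef → Ω' * Ω' = Mop m t Z → Ω' = Om m t Z) := by

  have htm' : t m ≠ 0 := ne_of_gt htm
  have habs : (0:ℝ) ≤ ‖Z‖ := norm_nonneg _
  have hO := Om_decomp m t Z
  have hM := Mop_decomp m t Z
  have hBB := Bm_sq m Z
  set r : ℝ := ‖Z‖ / t m with hrdef
  have hr0 : 0 ≤ r := div_nonneg habs htm.le
  have hr1 : r < 1 := (div_lt_one htm).mpr hZ
  set p : ℝ := Real.sqrt (1 + r) with hpdef
  set q : ℝ := Real.sqrt (1 - r) with hqdef
  have hp2 : p^2 = 1 + r := Real.sq_sqrt (by linarith)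
  have hq2 : q^2 = 1 - r := Real.sq_sqrt (by linarith)
  have hp0 : 0 < p := by rw [hpdef]; exact Real.sqrt_pos.mpr (by linarith)
  have hq0 : 0 ≤ q := Real.sqrt_nonneg _
  have hα : 0 < p + q := by linarith
  have hα' : p + q ≠ 0 := ne_of_gt hα
  have hα2 : (p+q)^2 = 2 + 2*(p*q) := by nlinarith [hp2, hq2]
  have hpq2 : (p*q)^2 = (1+r)*(1-r) := by rw [mul_pow, hp2, hq2]
  have hpq0 : 0 ≤ p*q := mul_nonneg hp0.le hq0
  have hZr : ‖Z‖ = r * t m := by rw [hrdef]; field_simp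
  have key1 : ((p+q)/2)^2 + (((p+q) * t m)⁻¹)^2 * (‖Z‖)^2 = 1 := by
    have hkey : (p+q)^2*(p+q)^2 + 4*r^2 = 4*(p+q)^2 := by
      linear_combination ((p+q)^2 - 2 + 2*(p*q)) * hα2 + 4 * hpq2
    rw [hZr]; field_simp; linear_combination hkey
  have key2 : 2 * (((p+q)/2) * (((p+q) * t m)⁻¹)) = (t m)⁻¹ := by
    field_simp
  have key3 : 0 < (p+q)/2 - ((p+q) * t m)⁻¹ * ‖Z‖ := by
    have heq : ((p+q) * t m)⁻¹ * ‖Z‖ = r / (p+q) := by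
      rw [hZr]; field_simp
    rw [heq, sub_pos, div_lt_div_iff₀ hα two_pos]
    nlinarith
  -- square identity
  have hsq : Om m t Z * Om m t Z = Mop m t Z := by
    rw [hO, hM, sq_decomp _ _ _ _ hBB]
    congr 1
    · rw [show ((((p+q)/2 : ℝ):ℂ)^2 + ((((p+q) * t m)⁻¹ : ℝ):ℂ)^2 * ((‖Z‖ ^ 2 : ℝ):ℂ)) = (1:ℂ) by exact_mod_cast key1]
      rw [one_smul]
    · congr 1
      exact_mod_cast key2
  -- hermitian
  have hH : (Om m t Z).IsHermitian := by
    rw [Matrix.IsHermitian, hO, conjTranspose_add, conjTranspose_smul, conjTranspose_smul,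
      conjTranspose_one, Bm_herm]
    simp [Complex.star_def, Complex.conj_ofReal]
  -- positive definiteness
  set c : ℝ := ((p+q) * t m)⁻¹ with hcdef
  set k : ℝ := c * ‖Z‖ with hkdef
  have hc0 : 0 < c := by rw [hcdef]; positivity
  have hD : Om m t Z = (((p+q)/2 - k : ℝ):ℂ) • 1 + (((k:ℝ):ℂ) • 1 + ((c:ℝ):ℂ) • Bm m Z) := by
    rw [hO]; push_cast; module
  have hDpsd : (((k:ℝ):ℂ) • (1 : Matrix (Fin (2*m)) (Fin (2*m)) ℂ) + ((c:ℝ):ℂ) • Bm m Z).PosSemidef := by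
    by_cases hZ0 : Z = 0
    · have hB0 : Bm m Z = 0 := by
        ext i j; simp [Bm, hZ0]
      have hk0 : k = 0 := by rw [hkdef, hZ0]; simp
      rw [hB0, hk0]
      simp only [Complex.ofReal_zero, zero_smul, smul_zero, add_zero]
      exact Matrix.PosSemidef.zero
    · have habs0 : 0 < ‖Z‖ := by
        simpa [norm_pos_iff] using hZ0
      have hk0 : 0 < k := by rw [hkdef]; positivity
      set D : Matrix (Fin (2*m)) (Fin (2*m)) ℂ := ((k:ℝ):ℂ) • 1 + ((c:ℝ):ℂ) • Bm m Z with hDdef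
      have hDH : Dᴴ = D := by
        rw [hDdef, conjTranspose_add, conjTranspose_smul, conjTranspose_smul,
          conjTranspose_one, Bm_herm]
        simp [Complex.star_def, Complex.conj_ofReal]
      have hDsq : D * D = ((2*k : ℝ):ℂ) • D := by
        rw [hDdef, sq_decomp _ _ _ _ hBB, smul_add, smul_smul, smul_smul]
        congr 1
        · congr 1
          have : k^2 + c^2 * ‖Z‖ ^ 2 = 2*k*k := by
            rw [hkdef]; ring
          exact_mod_cast this
        · congr 1
          have : 2*(k*c) = 2*k*c := by ring
          exact_mod_cast this
      set s : ℝ := (Real.sqrt (2*k))⁻¹ with hsdef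
      have hs2 : s^2 * (2*k) = 1 := by
        rw [hsdef, ← Real.sqrt_inv, Real.sq_sqrt (by positivity)]
        field_simp
      have hfact : (((s:ℝ):ℂ) • D)ᴴ * (((s:ℝ):ℂ) • D) = D := by
        rw [conjTranspose_smul, hDH, smul_mul_assoc, mul_smul_comm, hDsq, smul_smul, smul_smul]
        have hcoef : star ((s:ℝ):ℂ) * ((s:ℝ):ℂ) * ((2*k:ℝ):ℂ) = 1 := by
          rw [Complex.star_def, Complex.conj_ofReal]
          exact_mod_cast (by rw [← hs2]; ring : s * s * (2*k) = 1)
        rw [hcoef, one_smul]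
      rw [← hfact]
      exact Matrix.posSemidef_conjTranspose_mul_self _
  have hPD : (Om m t Z).PosDef := by
    rw [hD]
    exact Matrix.PosDef.add_posSemidef (posdef_smul_one key3) hDpsd
  refine ⟨hH, hPD, hsq, fun Ω' h1 h2 => ?_⟩
  exact psd_eq_of_sq h1.posSemidef hPD.posSemidef (by rw [pow_two, pow_two, h2, hsq])
end

section
/- Assume additionally that t_j > 0 for all j. Let Z be a complex number with Im Z = γ and 0 < |Z| < t_m, let α = sqrt(1 + |Z|/t_m) + sqrt(1 − |Z|/t_m), and let Ω = (α/2)·1_n + (1/(α t_m))·[[0, conj(Z) P_m], [Z P_m, 0]] be the positive definite square root of M(Z). Then Ω H Ω^{−1} equals the tridiagonal matrix h with entries h_{jj} = Re z_j for 1 ≤ j ≤ n, h_{j,j+1} = h_{j+1,j} = t_j for j ≠ m, h_{m,m+1} = (Re Z/Z)·t_m + i·(Im Z/Z)·sqrt(t_m² − |Z|²), h_{m+1,m} = conj(h_{m,m+1}), and all other entries zero. In particular Ω H Ω^{−1} is Hermitian. -/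
open Matrix Complex ComplexOrder

/-- The modified tunnelling amplitude at the defect bond:
`t'_m = (Re Z / Z) t_m + i (Im Z / Z) sqrt(t_m² − |Z|²)`. -/
noncomputable def hopm (m : ℕ) (t : ℕ → ℝ) (Z : ℂ) : ℂ :=
  ((Z.re : ℂ) / Z) * (t m : ℂ) +
    Complex.I * ((Z.im : ℂ) / Z) * ((Real.sqrt ((t m)^2 - (‖Z‖)^2) : ℝ) : ℂ)

/-- The equivalent Hermitian tridiagonal Hamiltonian `h`. -/
noncomputable def hHerm (m : ℕ) (t : ℕ → ℝ) (z : ℕ → ℂ) (Z : ℂ) :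
    Matrix (Fin (2*m)) (Fin (2*m)) ℂ :=
  fun i j =>
    if (i : ℕ) = (j : ℕ) then (((z ((i : ℕ) + 1)).re : ℝ) : ℂ)
    else if (i : ℕ) + 1 = (j : ℕ) then
      (if (i : ℕ) + 1 = m then hopm m t Z else ((t ((i : ℕ) + 1) : ℝ) : ℂ))
    else if (j : ℕ) + 1 = (i : ℕ) then
      (if (j : ℕ) + 1 = m then (starRingEnd ℂ) (hopm m t Z) else ((t ((j : ℕ) + 1) : ℝ) : ℂ))
    else 0

/-- auxiliary: α -/
noncomputable def alp (m : ℕ) (t : ℕ → ℝ) (Z : ℂ) : ℝ :=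
  Real.sqrt (1 + ‖Z‖ / t m) + Real.sqrt (1 - ‖Z‖ / t m)

/-- auxiliary: w = sqrt(t_m^2 - |Z|^2) -/
noncomputable def wq (m : ℕ) (t : ℕ → ℝ) (Z : ℂ) : ℝ :=
  Real.sqrt ((t m)^2 - (‖Z‖)^2)

lemma sum_two {n : ℕ} (f : Fin n → ℂ) (i j : Fin n) (hij : i ≠ j)
    (h0 : ∀ k, k ≠ i → k ≠ j → f k = 0) : ∑ k, f k = f i + f j := by
  rw [← Finset.sum_pair hij]
  exact (Finset.sum_subset (Finset.subset_univ _)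
    (fun x _ hx => h0 x (fun h => hx (by simp [h])) (fun h => hx (by simp [h])))).symm

-- entry lemmas for Om
lemma Om_diag (m : ℕ) (t : ℕ → ℝ) (Z : ℂ) (i : Fin (2*m)) :
    Om m t Z i i = ((alp m t Z / 2 : ℝ) : ℂ) := by simp [Om, alp]

lemma Om_anti (m : ℕ) (t : ℕ → ℝ) (Z : ℂ) (i j : Fin (2*m))
    (h : (i : ℕ) + (j : ℕ) + 1 = 2*m) :
    Om m t Z i j = (if (i : ℕ) < m then (starRingEnd ℂ) Z else Z) /
      (((alp m t Z : ℝ) : ℂ) * (t m : ℂ)) := by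
  have hij : i ≠ j := by
    intro hh; subst hh; omega
  simp [Om, alp, hij, h]

lemma Om_zero (m : ℕ) (t : ℕ → ℝ) (Z : ℂ) (i j : Fin (2*m))
    (h1 : i ≠ j) (h2 : (i : ℕ) + (j : ℕ) + 1 ≠ 2*m) :
    Om m t Z i j = 0 := by simp [Om, h1, h2]

-- entry lemmas for Hop
lemma Hop_diag (m : ℕ) (t : ℕ → ℝ) (z : ℕ → ℂ) (i j : Fin (2*m)) (h : (i:ℕ) = (j:ℕ)) :
    Hop m t z i j = z ((i:ℕ)+1) := by simp [Hop, h]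

lemma Hop_up (m : ℕ) (t : ℕ → ℝ) (z : ℕ → ℂ) (i j : Fin (2*m)) (h : (i:ℕ)+1 = (j:ℕ)) :
    Hop m t z i j = ((t ((i:ℕ)+1) : ℝ) : ℂ) := by
  have h1 : (i:ℕ) ≠ (j:ℕ) := by omega
  simp [Hop, h1, h]

lemma Hop_down (m : ℕ) (t : ℕ → ℝ) (z : ℕ → ℂ) (i j : Fin (2*m)) (h : (j:ℕ)+1 = (i:ℕ)) :
    Hop m t z i j = ((t ((j:ℕ)+1) : ℝ) : ℂ) := by
  have h1 : (i:ℕ) ≠ (j:ℕ) := by omega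
  have h2 : (i:ℕ)+1 ≠ (j:ℕ) := by omega
  simp [Hop, h1, h2, h]

lemma Hop_zero (m : ℕ) (t : ℕ → ℝ) (z : ℕ → ℂ) (i j : Fin (2*m))
    (h1 : (i:ℕ) ≠ (j:ℕ)) (h2 : (i:ℕ)+1 ≠ (j:ℕ)) (h3 : (j:ℕ)+1 ≠ (i:ℕ)) :
    Hop m t z i j = 0 := by simp [Hop, h1, h2, h3]

-- entry lemmas for hHerm
lemma hHerm_diag (m : ℕ) (t : ℕ → ℝ) (z : ℕ → ℂ) (Z : ℂ) (i j : Fin (2*m)) (h : (i:ℕ) = (j:ℕ)) :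
    hHerm m t z Z i j = (((z ((i:ℕ)+1)).re : ℝ) : ℂ) := by simp [hHerm, h]

lemma hHerm_up (m : ℕ) (t : ℕ → ℝ) (z : ℕ → ℂ) (Z : ℂ) (i j : Fin (2*m)) (h : (i:ℕ)+1 = (j:ℕ)) :
    hHerm m t z Z i j = (if (i:ℕ)+1 = m then hopm m t Z else ((t ((i:ℕ)+1) : ℝ) : ℂ)) := by
  have h1 : (i:ℕ) ≠ (j:ℕ) := by omega
  simp [hHerm, h1, h]

lemma hHerm_down (m : ℕ) (t : ℕ → ℝ) (z : ℕ → ℂ) (Z : ℂ) (i j : Fin (2*m)) (h : (j:ℕ)+1 = (i:ℕ)) :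
    hHerm m t z Z i j = (if (j:ℕ)+1 = m then (starRingEnd ℂ) (hopm m t Z)
      else ((t ((j:ℕ)+1) : ℝ) : ℂ)) := by
  have h1 : (i:ℕ) ≠ (j:ℕ) := by omega
  have h2 : (i:ℕ)+1 ≠ (j:ℕ) := by omega
  simp [hHerm, h1, h2, h]

lemma hHerm_zero (m : ℕ) (t : ℕ → ℝ) (z : ℕ → ℂ) (Z : ℂ) (i j : Fin (2*m))
    (h1 : (i:ℕ) ≠ (j:ℕ)) (h2 : (i:ℕ)+1 ≠ (j:ℕ)) (h3 : (j:ℕ)+1 ≠ (i:ℕ)) :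
    hHerm m t z Z i j = 0 := by simp [hHerm, h1, h2, h3]

-- product entry reductions
lemma OmH_apply (m : ℕ) (t : ℕ → ℝ) (z : ℕ → ℂ) (Z : ℂ) (i j : Fin (2*m)) :
    (Om m t Z * Hop m t z) i j
      = Om m t Z i i * Hop m t z i j + Om m t Z i i.rev * Hop m t z i.rev j := by
  rw [Matrix.mul_apply]
  refine sum_two _ i i.rev ?_ ?_
  · intro hh
    have := congrArg Fin.val hh
    rw [Fin.val_rev] at this
    omega
  · intro k hk hk'
    have : Om m t Z i k = 0 := by
      refine Om_zero m t Z i k (fun h => hk h.symm) ?_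
      intro h
      apply hk'
      apply Fin.ext
      rw [Fin.val_rev]
      omega
    rw [this, zero_mul]

lemma hOm_apply (m : ℕ) (t : ℕ → ℝ) (z : ℕ → ℂ) (Z : ℂ) (i j : Fin (2*m)) :
    (hHerm m t z Z * Om m t Z) i j
      = hHerm m t z Z i j * Om m t Z j j + hHerm m t z Z i j.rev * Om m t Z j.rev j := by
  rw [Matrix.mul_apply]
  have e : ∀ k, hHerm m t z Z i k * Om m t Z k j
      = (fun k => hHerm m t z Z i k * Om m t Z k j) k := fun _ => rfl
  refine sum_two _ j j.rev ?_ ?_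
  · intro hh
    have := congrArg Fin.val hh
    rw [Fin.val_rev] at this
    omega
  · intro k hk hk'
    have : Om m t Z k j = 0 := by
      refine Om_zero m t Z k j hk ?_
      intro h
      apply hk'
      apply Fin.ext
      rw [Fin.val_rev]
      omega
    rw [this, mul_zero]

-- key algebraic lemmas
lemma conj_eq_sub (Z : ℂ) : (starRingEnd ℂ) Z = Z - 2*Z.im*Complex.I := by
  have := Complex.sub_conj Z
  push_cast at this
  linear_combination -this

lemma re_eq_sub (Z : ℂ) : (Z.re : ℂ) = Z - Z.im*Complex.I := by
  have := Complex.re_add_im Z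
  linear_combination this

lemma absq (Z : ℂ) : Z * (Z - 2*Z.im*Complex.I) = ((‖Z‖ : ℝ) : ℂ)^2 := by
  rw [← conj_eq_sub, Complex.mul_conj]; norm_cast; exact (Complex.sq_norm Z).symm

lemma key1 (m : ℕ) (t : ℕ → ℝ) (Z : ℂ) (hZ0 : Z ≠ 0) (hle : ‖Z‖ ≤ t m)
    (htm : 0 < t m) :
    ((t m : ℂ) + ((wq m t Z : ℝ) : ℂ)) * ((t m : ℂ) - hopm m t Z)
      = Complex.I * (Z.im:ℂ) * (starRingEnd ℂ) Z := by
  unfold hopm wq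
  set w : ℝ := Real.sqrt ((t m)^2 - (‖Z‖)^2) with hw
  have hw2' : ((w:ℂ))^2 = ((t m):ℂ)^2 - ((‖Z‖ : ℝ):ℂ)^2 := by
    have : (w:ℝ)^2 = (t m)^2 - (‖Z‖)^2 :=
      Real.sq_sqrt (by nlinarith [norm_nonneg Z])
    norm_cast
  rw [re_eq_sub, conj_eq_sub]
  field_simp
  linear_combination (-Complex.I * (Z.im:ℂ)) * hw2' - (Complex.I * (Z.im:ℂ)) * absq Z

lemma key2 (m : ℕ) (t : ℕ → ℝ) (Z : ℂ) (hZ0 : Z ≠ 0) (hle : ‖Z‖ ≤ t m)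
    (htm : 0 < t m) :
    ((t m : ℂ) + ((wq m t Z : ℝ) : ℂ)) * ((t m : ℂ) - (starRingEnd ℂ) (hopm m t Z))
      = -(Complex.I * (Z.im:ℂ) * Z) := by
  have h := congrArg (starRingEnd ℂ) (key1 m t Z hZ0 hle htm)
  simp only [_root_.map_mul, map_sub, map_add, Complex.conj_ofReal, Complex.conj_I,
    Complex.conj_conj, RingHom.map_neg] at h
  linear_combination h

lemma key3 (m : ℕ) (t : ℕ → ℝ) (Z : ℂ) (hZ0 : Z ≠ 0) (hle : ‖Z‖ ≤ t m)
    (htm : 0 < t m) :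
    hopm m t Z * Z - (starRingEnd ℂ) Z * (t m : ℂ)
      = Complex.I * (Z.im:ℂ) * ((t m : ℂ) + ((wq m t Z : ℝ) : ℂ)) := by
  unfold hopm wq
  rw [re_eq_sub, conj_eq_sub]
  field_simp
  ring

lemma key4 (m : ℕ) (t : ℕ → ℝ) (Z : ℂ) (hZ0 : Z ≠ 0) (hle : ‖Z‖ ≤ t m)
    (htm : 0 < t m) :
    (starRingEnd ℂ) (hopm m t Z) * (starRingEnd ℂ) Z - Z * (t m : ℂ)
      = -(Complex.I * (Z.im:ℂ) * ((t m : ℂ) + ((wq m t Z : ℝ) : ℂ))) := by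
  have h := congrArg (starRingEnd ℂ) (key3 m t Z hZ0 hle htm)
  simp only [_root_.map_mul, map_sub, map_add, Complex.conj_ofReal, Complex.conj_I,
    Complex.conj_conj] at h
  linear_combination h

lemma alpha_sq (m : ℕ) (t : ℕ → ℝ) (Z : ℂ) (hle : ‖Z‖ ≤ t m) (htm : 0 < t m) :
    (alp m t Z)^2 * t m = 2 * (t m + wq m t Z) := by
  unfold alp wq
  set r : ℝ := ‖Z‖ / t m with hr
  have hr0 : 0 ≤ r := div_nonneg (norm_nonneg Z) htm.le
  have hr1 : r ≤ 1 := by rw [hr, div_le_one htm]; exact hle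
  have h1 : Real.sqrt (1+r) ^ 2 = 1 + r := Real.sq_sqrt (by linarith)
  have h2 : Real.sqrt (1-r) ^ 2 = 1 - r := Real.sq_sqrt (by linarith)
  have h3 : Real.sqrt (1+r) * Real.sqrt (1-r) = Real.sqrt ((1+r)*(1-r)) :=
    (Real.sqrt_mul (by linarith) _).symm
  have h4 : (t m)^2 - (‖Z‖)^2 = ((1+r)*(1-r)) * (t m)^2 := by
    rw [hr]
    field_simp
    ring
  have h5 : Real.sqrt ((t m)^2 - (‖Z‖)^2) = Real.sqrt ((1+r)*(1-r)) * t m := by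
    rw [h4, Real.sqrt_mul (by nlinarith), Real.sqrt_sq htm.le]
  rw [h5]
  nlinarith [h1, h2, h3]

lemma alpha_pos (m : ℕ) (t : ℕ → ℝ) (Z : ℂ) (hle : ‖Z‖ ≤ t m) (htm : 0 < t m) :
    0 < alp m t Z := by
  unfold alp
  have : (0:ℝ) < Real.sqrt (1 + ‖Z‖ / t m) := by
    apply Real.sqrt_pos.mpr
    have := div_nonneg (norm_nonneg Z) htm.le
    linarith
  have h2 : 0 ≤ Real.sqrt (1 - ‖Z‖ / t m) := Real.sqrt_nonneg _
  linarith

lemma wq_pos (m : ℕ) (t : ℕ → ℝ) (Z : ℂ) (hlt : ‖Z‖ < t m) (htm : 0 < t m) :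
    0 < wq m t Z := by
  unfold wq
  apply Real.sqrt_pos.mpr
  nlinarith [norm_nonneg Z]

lemma key_eq (m : ℕ) (hm : 1 ≤ m) (t : ℕ → ℝ) (z : ℕ → ℂ)
    (htsym : ∀ j, 1 ≤ j → j ≤ 2*m - 1 → t j = t (2*m - j))
    (hzreal : ∀ j, 1 ≤ j → j ≤ 2*m → j ≠ m → j ≠ m + 1 → (z j).im = 0)
    (hzsym : ∀ j, 1 ≤ j → j ≤ 2*m → z (2*m + 1 - j) = (starRingEnd ℂ) (z j))
    (Z : ℂ) (hZim : Z.im = (z m).im) (hZ0 : Z ≠ 0)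
    (hlt : ‖Z‖ < t m) (htm : 0 < t m) :
    Om m t Z * Hop m t z = hHerm m t z Z * Om m t Z := by
  have hle : ‖Z‖ ≤ t m := hlt.le
  have hA0 : ((alp m t Z : ℝ) : ℂ) ≠ 0 := by
    exact_mod_cast (alpha_pos m t Z hle htm).ne'
  have htm0 : ((t m : ℝ) : ℂ) ≠ 0 := by exact_mod_cast htm.ne'
  have hA2 : ((alp m t Z : ℝ) : ℂ)^2 * ((t m : ℝ) : ℂ)
      = 2 * (((t m : ℝ) : ℂ) + ((wq m t Z : ℝ) : ℂ)) := by
    exact_mod_cast congrArg (fun x : ℝ => (x : ℂ)) (alpha_sq m t Z hle htm)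
  have k1 := key1 m t Z hZ0 hle htm
  have k2 := key2 m t Z hZ0 hle htm
  have k3 := key3 m t Z hZ0 hle htm
  have k4 := key4 m t Z hZ0 hle htm
  have hzm1 : z (m+1) = (starRingEnd ℂ) (z m) := by
    have h := hzsym m hm (by omega)
    rwa [show 2*m+1-m = m+1 by omega] at h
  have hzmre : ((z (m+1)).re : ℝ) = (z m).re := by rw [hzm1]; exact Complex.conj_re _
  have hzmim : z m - (((z m).re : ℝ) : ℂ) = Complex.I * (Z.im : ℂ) := by
    rw [hZim]
    have := re_eq_sub (z m)
    linear_combination -this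
  have hzconj : (starRingEnd ℂ) (z m) = (((z m).re : ℝ) : ℂ) - Complex.I * (Z.im : ℂ) := by
    rw [hZim, conj_eq_sub, re_eq_sub]
    ring
  ext i j
  have hi := i.isLt
  have hj := j.isLt
  have hri : (i.rev : ℕ) = 2*m - ((i:ℕ)+1) := Fin.val_rev i
  have hrj : (j.rev : ℕ) = 2*m - ((j:ℕ)+1) := Fin.val_rev j
  rw [OmH_apply, hOm_apply, Om_diag, Om_diag,
      Om_anti m t Z i i.rev (by omega), Om_anti m t Z j.rev j (by omega)]
  by_cases hA : (i:ℕ) + (j:ℕ) + 2 = 2*m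
  · -- antidiagonal - 1 : i.rev = j+1, j.rev = i+1
    rw [Hop_down m t z i.rev j (by omega), hHerm_up m t z Z i j.rev (by omega)]
    by_cases him : (i:ℕ)+1 = m
    · -- i = j = m-1
      have hij : (i:ℕ) = (j:ℕ) := by omega
      rw [Hop_diag m t z i j hij, hHerm_diag m t z Z i j hij, if_pos him,
          if_pos (show (i:ℕ) < m by omega), if_neg (show ¬ ((j.rev:ℕ) < m) by omega),
          show (j:ℕ)+1 = m by omega, show (i:ℕ)+1 = m by omega]
      -- algebra: uses k3
      push_cast
      field_simp
      linear_combination (((alp m t Z : ℝ):ℂ)^2*((t m : ℝ):ℂ))*hzmim - 2*k3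
        + (Complex.I*(Z.im:ℂ))*hA2
    · have hij : (i:ℕ) ≠ (j:ℕ) := by omega
      have hts : t ((j:ℕ)+1) = t ((i:ℕ)+1) := by
        rw [show (j:ℕ)+1 = 2*m - ((i:ℕ)+1) by omega]
        exact (htsym ((i:ℕ)+1) (by omega) (by omega)).symm
      rw [Hop_zero m t z i j hij (by omega) (by omega),
          hHerm_zero m t z Z i j hij (by omega) (by omega), if_neg him, hts]
      by_cases hltm : (i:ℕ) < m
      · rw [if_pos hltm, if_pos (show ((j.rev:ℕ)) < m by omega)]
        ring
      · rw [if_neg hltm, if_neg (show ¬ ((j.rev:ℕ)) < m by omega)]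
        ring
  · by_cases hB : (i:ℕ) + (j:ℕ) + 1 = 2*m
    · -- antidiagonal : i.rev = j, j.rev = i
      have e1 : Hop m t z i.rev j = z ((j:ℕ)+1) := by
        rw [Hop_diag m t z i.rev j (by omega), show ((i.rev:ℕ)) = (j:ℕ) by omega]
      have e2 : hHerm m t z Z i j.rev = (((z ((i:ℕ)+1)).re : ℝ) : ℂ) := by
        rw [hHerm_diag m t z Z i j.rev (by omega)]
      have erev : ((j.rev : Fin (2*m)) : ℕ) = (i:ℕ) := by omega
      rw [e1, e2, erev]
      by_cases him : (i:ℕ)+1 = m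
      · -- i = m-1, j = m
        rw [Hop_up m t z i j (by omega), hHerm_up m t z Z i j (by omega), if_pos him,
            if_pos (show (i:ℕ) < m by omega), show (j:ℕ)+1 = m+1 by omega,
            show (i:ℕ)+1 = m by omega, hzm1, hzconj]
        -- algebra: uses k1
        push_cast
        field_simp
        linear_combination (((t m : ℝ):ℂ) - hopm m t Z)*hA2 + 2*k1
      · by_cases hmι : (i:ℕ) = m
        · -- i = m, j = m-1
          rw [Hop_down m t z i j (by omega), hHerm_down m t z Z i j (by omega),
              if_pos (show (j:ℕ)+1 = m by omega),
              if_neg (show ¬ ((i:ℕ) < m) by omega), show (j:ℕ)+1 = m by omega,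
              show (i:ℕ)+1 = m+1 by omega, hzmre]
          -- algebra: uses k2
          push_cast
          field_simp
          linear_combination (((t m : ℝ):ℂ) - (starRingEnd ℂ) (hopm m t Z))*hA2 + 2*k2
            + 2*Z*hzmim
        · -- generic antidiagonal entry
          have hzz : z ((j:ℕ)+1) = (((z ((i:ℕ)+1)).re : ℝ) : ℂ) := by
            have h := hzsym ((i:ℕ)+1) (by omega) (by omega)
            have h0 : (z ((i:ℕ)+1)).im = 0 :=
              hzreal ((i:ℕ)+1) (by omega) (by omega) (by omega) (by omega)
            rw [show (j:ℕ)+1 = 2*m+1-((i:ℕ)+1) by omega, h]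
            exact Complex.ext (by simp) (by simp [h0])
          rw [Hop_zero m t z i j (by omega) (by omega) (by omega),
              hHerm_zero m t z Z i j (by omega) (by omega) (by omega), hzz]
          push_cast
          ring
    · by_cases hC : (i:ℕ) + (j:ℕ) = 2*m
      · -- antidiagonal + 1 : i.rev = j-1, j.rev = i-1
        have e1 : Hop m t z i.rev j = ((t ((j:ℕ)) : ℝ) : ℂ) := by
          rw [Hop_up m t z i.rev j (by omega), show ((i.rev:ℕ))+1 = (j:ℕ) by omega]
        have e2 : hHerm m t z Z i j.rev
            = (if (i:ℕ) = m then (starRingEnd ℂ) (hopm m t Z) else ((t ((i:ℕ)) : ℝ) : ℂ)) := by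
          rw [hHerm_down m t z Z i j.rev (by omega), show ((j.rev:ℕ))+1 = (i:ℕ) by omega]
        rw [e1, e2]
        by_cases hmι : (i:ℕ) = m
        · -- i = m, j = m
          rw [Hop_diag m t z i j (by omega), hHerm_diag m t z Z i j (by omega),
              if_pos hmι, if_neg (show ¬ ((i:ℕ) < m) by omega),
              if_pos (show ((j.rev:ℕ)) < m by omega), show (j:ℕ) = m by omega,
              show (i:ℕ)+1 = m+1 by omega, hzmre, hzm1, hzconj]
          -- algebra: uses k4
          push_cast
          field_simp
          linear_combination -(Complex.I*(Z.im:ℂ))*hA2 - 2*k4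
        · have hts : t ((j:ℕ)) = t ((i:ℕ)) := by
            rw [show (j:ℕ) = 2*m - (i:ℕ) by omega]
            exact (htsym ((i:ℕ)) (by omega) (by omega)).symm
          rw [Hop_zero m t z i j (by omega) (by omega) (by omega),
              hHerm_zero m t z Z i j (by omega) (by omega) (by omega), if_neg hmι, hts]
          by_cases hltm : (i:ℕ) < m
          · rw [if_pos hltm, if_pos (show ((j.rev:ℕ)) < m by omega)]
            ring
          · rw [if_neg hltm, if_neg (show ¬ ((j.rev:ℕ)) < m by omega)]
            ring
      · -- generic : far from the antidiagonal
        rw [Hop_zero m t z i.rev j (by omega) (by omega) (by omega),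
            hHerm_zero m t z Z i j.rev (by omega) (by omega) (by omega)]
        by_cases hd : (i:ℕ) = (j:ℕ)
        · have h0 : (z ((i:ℕ)+1)).im = 0 :=
            hzreal ((i:ℕ)+1) (by omega) (by omega) (by omega) (by omega)
          have hzz : z ((i:ℕ)+1) = (((z ((i:ℕ)+1)).re : ℝ) : ℂ) :=
            Complex.ext (by simp) (by simp [h0])
          rw [Hop_diag m t z i j hd, hHerm_diag m t z Z i j hd]
          conv_lhs => rw [hzz]
          ring
        · by_cases hu : (i:ℕ)+1 = (j:ℕ)
          · rw [Hop_up m t z i j hu, hHerm_up m t z Z i j hu,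
                if_neg (show ¬ ((i:ℕ)+1 = m) by omega)]
            ring
          · by_cases hdn : (j:ℕ)+1 = (i:ℕ)
            · rw [Hop_down m t z i j hdn, hHerm_down m t z Z i j hdn,
                  if_neg (show ¬ ((j:ℕ)+1 = m) by omega)]
              ring
            · rw [Hop_zero m t z i j hd hu hdn, hHerm_zero m t z Z i j hd hu hdn]
              ring

noncomputable def Oinv (m : ℕ) (t : ℕ → ℝ) (Z : ℂ) : Matrix (Fin (2*m)) (Fin (2*m)) ℂ :=
  fun i j =>
    if i = j then ((t m / wq m t Z * (alp m t Z / 2) : ℝ) : ℂ)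
    else if (i:ℕ)+(j:ℕ)+1 = 2*m then
      -(((t m / wq m t Z : ℝ):ℂ) * ((if (i:ℕ) < m then (starRingEnd ℂ) Z else Z) /
        (((alp m t Z : ℝ):ℂ) * ((t m : ℝ) : ℂ))))
    else 0

lemma Oinv_zero (m : ℕ) (t : ℕ → ℝ) (Z : ℂ) (i j : Fin (2*m))
    (h1 : i ≠ j) (h2 : (i : ℕ) + (j : ℕ) + 1 ≠ 2*m) :
    Oinv m t Z i j = 0 := by simp [Oinv, h1, h2]

lemma Om_Oinv (m : ℕ) (hm : 1 ≤ m) (t : ℕ → ℝ) (Z : ℂ)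
    (hlt : ‖Z‖ < t m) (htm : 0 < t m) :
    Om m t Z * Oinv m t Z = 1 := by
  have hle : ‖Z‖ ≤ t m := hlt.le
  have hA0 : ((alp m t Z : ℝ) : ℂ) ≠ 0 := by
    exact_mod_cast (alpha_pos m t Z hle htm).ne'
  have htm0 : ((t m : ℝ) : ℂ) ≠ 0 := by exact_mod_cast htm.ne'
  have hW0 : ((wq m t Z : ℝ) : ℂ) ≠ 0 := by
    exact_mod_cast (wq_pos m t Z hlt htm).ne'
  have hA2 : ((alp m t Z : ℝ) : ℂ)^2 * ((t m : ℝ) : ℂ)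
      = 2 * (((t m : ℝ) : ℂ) + ((wq m t Z : ℝ) : ℂ)) := by
    exact_mod_cast congrArg (fun x : ℝ => (x : ℂ)) (alpha_sq m t Z hle htm)
  have hW2 : ((wq m t Z : ℝ) : ℂ)^2 = ((t m : ℝ) : ℂ)^2 - Z * (starRingEnd ℂ) Z := by
    have h1 : (wq m t Z)^2 = (t m)^2 - (‖Z‖)^2 := by
      unfold wq
      exact Real.sq_sqrt (by nlinarith [norm_nonneg Z])
    have h2 : Z * (starRingEnd ℂ) Z = ((‖Z‖ : ℝ) : ℂ)^2 := by
      rw [Complex.mul_conj]; norm_cast; exact (Complex.sq_norm Z).symm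
    rw [h2]
    exact_mod_cast congrArg (fun x : ℝ => (x : ℂ)) h1
  ext i j
  have hi := i.isLt
  have hj := j.isLt
  have hrj : (j.rev : ℕ) = 2*m - ((j:ℕ)+1) := Fin.val_rev j
  rw [Matrix.mul_apply]
  rw [sum_two _ j j.rev (fun hh => by have := congrArg Fin.val hh; omega)
    (fun k hk hk' => by
      have : Oinv m t Z k j = 0 := by
        refine Oinv_zero m t Z k j hk (fun h => hk' (Fin.ext (by omega)))
      rw [this, mul_zero])]
  by_cases hd : i = j
  · subst hd
    have hdd : (i:ℕ) ≠ (i.rev:ℕ) := by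
      have : (i.rev : ℕ) = 2*m - ((i:ℕ)+1) := Fin.val_rev i
      omega
    rw [Om_diag, Om_anti m t Z i i.rev (by omega)]
    have e1 : Oinv m t Z i i = ((t m / wq m t Z * (alp m t Z / 2) : ℝ) : ℂ) := by
      simp [Oinv]
    have e2 : Oinv m t Z i.rev i
        = -(((t m / wq m t Z : ℝ):ℂ) * ((if ((i.rev : Fin (2*m)):ℕ) < m then (starRingEnd ℂ) Z else Z) /
          (((alp m t Z : ℝ):ℂ) * ((t m : ℝ) : ℂ)))) := by
      simp only [Oinv]
      rw [if_neg (fun hh : i.rev = i => hdd ((congrArg Fin.val hh).symm)),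
          if_pos (show ((i.rev:Fin (2*m)):ℕ) + ((i:Fin (2*m)):ℕ) + 1 = 2*m by omega)]
    rw [e1, e2, Matrix.one_apply_eq]
    by_cases hltm : (i:ℕ) < m
    · rw [if_pos hltm, if_neg (show ¬ ((i.rev:Fin (2*m)):ℕ) < m by omega)]
      push_cast
      field_simp
      linear_combination ((((alp m t Z:ℝ):ℂ)^2*((t m:ℝ):ℂ) + 2*((t m:ℝ):ℂ) - 2*((wq m t Z:ℝ):ℂ)))*hA2 - 4*hW2
    · rw [if_neg hltm, if_pos (show ((i.rev:Fin (2*m)):ℕ) < m by omega)]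
      push_cast
      field_simp
      linear_combination ((((alp m t Z:ℝ):ℂ)^2*((t m:ℝ):ℂ) + 2*((t m:ℝ):ℂ) - 2*((wq m t Z:ℝ):ℂ)))*hA2 - 4*hW2
  · rw [Matrix.one_apply_ne hd]
    by_cases hB : (i:ℕ) + (j:ℕ) + 1 = 2*m
    · -- antidiagonal : j.rev = i
      have hji : j.rev = i := Fin.ext (by omega)
      rw [hji]
      have e1 : Oinv m t Z j j = ((t m / wq m t Z * (alp m t Z / 2) : ℝ) : ℂ) := by
        simp [Oinv]
      have e2 : Oinv m t Z i j
          = -(((t m / wq m t Z : ℝ):ℂ) * ((if (i:ℕ) < m then (starRingEnd ℂ) Z else Z) /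
            (((alp m t Z : ℝ):ℂ) * ((t m : ℝ) : ℂ)))) := by
        simp only [Oinv]
        rw [if_neg hd, if_pos hB]
      rw [e1, e2, Om_anti m t Z i j hB, Om_diag]
      push_cast
      ring
    · -- generic
      have hz1 : Om m t Z i j = 0 := Om_zero m t Z i j hd hB
      have hz2 : Om m t Z i j.rev = 0 := by
        refine Om_zero m t Z i j.rev (fun hh => ?_) (by omega)
        have := congrArg Fin.val hh
        omega
      rw [hz1, hz2, zero_mul, zero_mul, add_zero]

lemma hHerm_herm (m : ℕ) (hm : 1 ≤ m) (t : ℕ → ℝ) (z : ℕ → ℂ) (Z : ℂ) :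
    (hHerm m t z Z).IsHermitian := by
  unfold Matrix.IsHermitian
  ext i j
  rw [Matrix.conjTranspose_apply]
  by_cases hd : (i:ℕ) = (j:ℕ)
  · rw [hHerm_diag m t z Z j i hd.symm, hHerm_diag m t z Z i j hd, hd]
    exact Complex.conj_ofReal _
  · by_cases hu : (i:ℕ)+1 = (j:ℕ)
    · rw [hHerm_down m t z Z j i hu, hHerm_up m t z Z i j hu]
      by_cases hmm : (i:ℕ)+1 = m
      · rw [if_pos hmm, if_pos hmm, RCLike.star_def, Complex.conj_conj]
      · rw [if_neg hmm, if_neg hmm]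
        exact Complex.conj_ofReal _
    · by_cases hdn : (j:ℕ)+1 = (i:ℕ)
      · rw [hHerm_up m t z Z j i hdn, hHerm_down m t z Z i j hdn]
        by_cases hmm : (j:ℕ)+1 = m
        · rw [if_pos hmm, if_pos hmm]
          rfl
        · rw [if_neg hmm, if_neg hmm]
          exact Complex.conj_ofReal _
      · rw [hHerm_zero m t z Z j i (fun h => hd h.symm) hdn hu,
            hHerm_zero m t z Z i j hd hu hdn]
        exact star_zero _

theorem stmt4 (m : ℕ) (hm : 1 ≤ m) (t : ℕ → ℝ) (z : ℕ → ℂ)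
    (ht0 : ∀ j, 1 ≤ j → j ≤ 2*m - 1 → t j ≠ 0)
    (htsym : ∀ j, 1 ≤ j → j ≤ 2*m - 1 → t j = t (2*m - j))
    (htm : 0 < t m)
    (hzreal : ∀ j, 1 ≤ j → j ≤ 2*m → j ≠ m → j ≠ m + 1 → (z j).im = 0)
    (hzsym : ∀ j, 1 ≤ j → j ≤ 2*m → z (2*m + 1 - j) = (starRingEnd ℂ) (z j))
    (hγ : 0 ≤ (z m).im)
    (htpos : ∀ j, 1 ≤ j → j ≤ 2*m - 1 → 0 < t j)
    (Z : ℂ) (hZim : Z.im = (z m).im)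
    (hZ0 : 0 < ‖Z‖) (hZ : ‖Z‖ < t m) :
    Om m t Z * Hop m t z * (Om m t Z)⁻¹ = hHerm m t z Z ∧
      (hHerm m t z Z).IsHermitian := by
  have hZne : Z ≠ 0 := by
    intro h
    rw [h] at hZ0
    simp at hZ0
  have hOO : Om m t Z * Oinv m t Z = 1 := Om_Oinv m hm t Z hZ htm
  constructor
  · rw [Matrix.inv_eq_right_inv hOO,
        key_eq m hm t z htsym hzreal hzsym Z hZim hZne hZ htm,
        Matrix.mul_assoc, hOO, Matrix.mul_one]
  · exact hHerm_herm m hm t z Z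
end

section
/- Assume 0 ≤ γ < t_m, and define the n×n block matrix C = (1/sqrt(t_m² − γ²))·[[iγ·1_m, t_m P_m], [t_m P_m, −iγ·1_m]]. Then C commutes with H (C H = H C) and C is an involution (C² = 1_n). -/
open Matrix Complex

/-- The symmetry operator
`C = (1/sqrt(t_m² − γ²))·[[iγ·1_m, t_m P_m],[t_m P_m, −iγ·1_m]]`. -/
noncomputable def Cop (m : ℕ) (t : ℕ → ℝ) (γ : ℝ) :
    Matrix (Fin (2*m)) (Fin (2*m)) ℂ :=
  fun i j =>
    if i = j then
      (if (i : ℕ) < m then Complex.I * (γ : ℂ) else -(Complex.I * (γ : ℂ))) /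
        ((Real.sqrt ((t m)^2 - γ^2) : ℝ) : ℂ)
    else if (i : ℕ) + (j : ℕ) + 1 = 2*m then
      (t m : ℂ) / ((Real.sqrt ((t m)^2 - γ^2) : ℝ) : ℂ)
    else 0


/-- Entry pattern of the tridiagonal matrix, on natural indices. -/
noncomputable def Ent (t : ℕ → ℝ) (z : ℕ → ℂ) (a b : ℕ) : ℂ :=
  if a = b then z (a + 1)
  else if a + 1 = b then ((t (a + 1) : ℝ) : ℂ)
  else if b + 1 = a then ((t (b + 1) : ℝ) : ℂ)
  else 0

/-- Diagonal sign matrix `F = diag(1_m, -1_m)`. -/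
noncomputable def Fmat (m : ℕ) : Matrix (Fin (2*m)) (Fin (2*m)) ℂ :=
  Matrix.diagonal (fun i => if (i : ℕ) < m then 1 else -1)

/-- Antidiagonal reversal matrix. -/
noncomputable def Pmat (m : ℕ) : Matrix (Fin (2*m)) (Fin (2*m)) ℂ :=
  fun i j => if (i : ℕ) + (j : ℕ) + 1 = 2*m then 1 else 0

lemma Pmat_mul (m : ℕ) (A : Matrix (Fin (2*m)) (Fin (2*m)) ℂ) (i j : Fin (2*m)) :
    (Pmat m * A) i j = A i.rev j := by
  rw [Matrix.mul_apply, Finset.sum_eq_single i.rev]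
  · have hi := i.isLt
    have : (i : ℕ) + (i.rev : ℕ) + 1 = 2*m := by
      rw [Fin.val_rev]; omega
    simp only [Pmat, if_pos this, one_mul]
  · intro b _ hb
    have hi := i.isLt; have hbb := b.isLt
    have : ¬ ((i : ℕ) + (b : ℕ) + 1 = 2*m) := by
      intro h
      apply hb
      apply Fin.ext
      rw [Fin.val_rev]; omega
    simp only [Pmat, if_neg this, zero_mul]
  · intro h; exact absurd (Finset.mem_univ _) h

lemma mul_Pmat (m : ℕ) (A : Matrix (Fin (2*m)) (Fin (2*m)) ℂ) (i j : Fin (2*m)) :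
    (A * Pmat m) i j = A i j.rev := by
  rw [Matrix.mul_apply, Finset.sum_eq_single j.rev]
  · have hj := j.isLt
    have : (j.rev : ℕ) + (j : ℕ) + 1 = 2*m := by
      rw [Fin.val_rev]; omega
    simp only [Pmat, if_pos this, mul_one]
  · intro b _ hb
    have hj := j.isLt; have hbb := b.isLt
    have : ¬ ((b : ℕ) + (j : ℕ) + 1 = 2*m) := by
      intro h
      apply hb
      apply Fin.ext
      rw [Fin.val_rev]; omega
    simp only [Pmat, if_neg this, mul_zero]
  · intro h; exact absurd (Finset.mem_univ _) h

lemma Pmat_Pmat (m : ℕ) : Pmat m * Pmat m = 1 := by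
  ext i j
  rw [Pmat_mul, Matrix.one_apply]
  have hi := i.isLt; have hj := j.isLt
  have hrev : (i.rev : ℕ) = 2*m - (↑i + 1) := Fin.val_rev i
  by_cases h : i = j
  · subst h
    have : (i.rev : ℕ) + (i : ℕ) + 1 = 2*m := by omega
    simp only [Pmat, if_pos this]; simp
  · have : ¬ ((i.rev : ℕ) + (j : ℕ) + 1 = 2*m) := by
      intro hc
      exact h (Fin.ext (by omega))
    simp only [Pmat, if_neg this, if_neg h]

lemma Fmat_Fmat (m : ℕ) : Fmat m * Fmat m = 1 := by
  rw [Fmat, Matrix.diagonal_mul_diagonal]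
  have : (fun i : Fin (2*m) => (if (i : ℕ) < m then (1:ℂ) else -1) * (if (i : ℕ) < m then 1 else -1)) = fun _ => 1 := by
    funext i; split_ifs <;> ring
  rw [this, ← Matrix.diagonal_one]

lemma Pmat_Fmat (m : ℕ) : Pmat m * Fmat m = -(Fmat m * Pmat m) := by
  ext i j
  rw [Fmat, Matrix.neg_apply, Matrix.mul_diagonal, Matrix.diagonal_mul]
  have hi := i.isLt; have hj := j.isLt
  by_cases h : (i : ℕ) + (j : ℕ) + 1 = 2*m
  · have : ((i:ℕ) < m) ↔ ¬ ((j:ℕ) < m) := by omega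
    simp only [Pmat, if_pos h]
    split_ifs <;> first | (exfalso; omega) | ring1
  · simp [Pmat, h]

set_option maxHeartbeats 2000000 in
lemma key (m : ℕ) (t : ℕ → ℝ) (z : ℕ → ℂ) (γ : ℝ)
    (htt : ∀ p q, p + q = 2*m → 1 ≤ p → 1 ≤ q → ((t q : ℝ) : ℂ) = ((t p : ℝ) : ℂ))
    (hzz : ∀ p q, p + q = 2*m + 1 → 1 ≤ p → p ≤ 2*m → p ≠ m → p ≠ m + 1 → z q = z p)
    (hzm : z (m + 1) = z m - 2 * Complex.I * (γ : ℂ))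
    (hm : 1 ≤ m) (a b a' b' : ℕ)
    (ha : a + a' + 1 = 2*m) (hb : b + b' + 1 = 2*m) :
    Complex.I * (γ : ℂ) * ((if a < m then (1:ℂ) else -1) * Ent t z a b)
      + ((t m : ℝ) : ℂ) * Ent t z a' b =
    Complex.I * (γ : ℂ) * (Ent t z a b * (if b < m then (1:ℂ) else -1))
      + ((t m : ℝ) : ℂ) * Ent t z a b' := by
  unfold Ent
  split_ifs <;>
  first
    | (exfalso; omega)
    | ring1
    | (rw [show b + 1 = a + 1 from by omega]; ring1)
    | (rw [show b' + 1 = a' + 1 from by omega]; ring1)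
    | (rw [hzz (a+1) (a'+1) (by omega) (by omega) (by omega) (by omega) (by omega)]; ring1)
    | (rw [htt (a+1) (b+1) (by omega) (by omega) (by omega)]; ring1)
    | (rw [htt (a'+1) (b'+1) (by omega) (by omega) (by omega)]; ring1)
    | (have h1 : a + 1 = m := by omega
       have h2 : a' + 1 = m + 1 := by omega
       rw [h1, h2, hzm]; ring1)
    | (have h1 : b + 1 = m := by omega
       have h2 : a' + 1 = m := by omega
       have h3 : a + 1 = m + 1 := by omega
       rw [h1, h2, h3, hzm]; ring1)

lemma Hop_apply (m : ℕ) (t : ℕ → ℝ) (z : ℕ → ℂ) (i j : Fin (2*m)) :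
    Hop m t z i j = Ent t z (i : ℕ) (j : ℕ) := rfl

theorem stmt5 (m : ℕ) (hm : 1 ≤ m) (t : ℕ → ℝ) (z : ℕ → ℂ)
    (ht0 : ∀ j, 1 ≤ j → j ≤ 2*m - 1 → t j ≠ 0)
    (htsym : ∀ j, 1 ≤ j → j ≤ 2*m - 1 → t j = t (2*m - j))
    (htm : 0 < t m)
    (hzreal : ∀ j, 1 ≤ j → j ≤ 2*m → j ≠ m → j ≠ m + 1 → (z j).im = 0)
    (hzsym : ∀ j, 1 ≤ j → j ≤ 2*m → z (2*m + 1 - j) = (starRingEnd ℂ) (z j))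
    (hγ : 0 ≤ (z m).im)
    (hγlt : (z m).im < t m) :
    Cop m t ((z m).im) * Hop m t z = Hop m t z * Cop m t ((z m).im) ∧
      Cop m t ((z m).im) * Cop m t ((z m).im) = 1 := by
  set γ : ℝ := (z m).im with hγdef
  -- scalar facts
  have htt : ∀ p q, p + q = 2*m → 1 ≤ p → 1 ≤ q → ((t q : ℝ) : ℂ) = ((t p : ℝ) : ℂ) := by
    intro p q hpq hp hq
    have h := htsym p hp (by omega)
    rw [show 2*m - p = q from by omega] at h
    rw [h]
  have hzz : ∀ p q, p + q = 2*m + 1 → 1 ≤ p → p ≤ 2*m → p ≠ m → p ≠ m + 1 → z q = z p := by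
    intro p q hpq hp hp2 hpm hpm1
    have h := hzsym p hp hp2
    rw [show 2*m + 1 - p = q from by omega] at h
    rw [h, Complex.conj_eq_iff_im.mpr (hzreal p hp hp2 hpm hpm1)]
  have hzm : z (m + 1) = z m - 2 * Complex.I * (γ : ℂ) := by
    have h := hzsym m hm (by omega)
    rw [show 2*m + 1 - m = m + 1 from by omega] at h
    rw [h]
    apply Complex.ext <;>
      simp [Complex.conj_re, Complex.conj_im, Complex.sub_re, Complex.sub_im,
        Complex.mul_re, Complex.mul_im] <;> ring
  -- sqrt facts
  have hpos : (0:ℝ) < (t m)^2 - γ^2 := by nlinarith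
  set s : ℝ := Real.sqrt ((t m)^2 - γ^2) with hsdef
  have hs_pos : 0 < s := Real.sqrt_pos.mpr hpos
  have hs0 : ((s : ℝ) : ℂ) ≠ 0 := by
    exact_mod_cast Complex.ofReal_ne_zero.mpr (ne_of_gt hs_pos)
  have hs2 : ((s : ℝ) : ℂ)^2 = ((t m : ℝ) : ℂ)^2 - ((γ : ℝ) : ℂ)^2 := by
    have h2 : s^2 = (t m)^2 - γ^2 := Real.sq_sqrt (le_of_lt hpos)
    have h3 := congrArg (fun r : ℝ => (r : ℂ)) h2
    push_cast at h3
    exact h3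
  -- decomposition of Cop
  have hC : Cop m t γ = (Complex.I * (γ:ℂ) / ((s:ℝ):ℂ)) • Fmat m
      + (((t m : ℝ):ℂ) / ((s:ℝ):ℂ)) • Pmat m := by
    ext i j
    have hi := i.isLt; have hj := j.isLt
    simp only [Cop, Fmat, Pmat, Matrix.add_apply, Matrix.smul_apply,
      Matrix.diagonal_apply, smul_eq_mul]
    by_cases h : i = j
    · subst h
      have hP : ¬ ((i:ℕ) + (i:ℕ) + 1 = 2*m) := by omega
      rw [if_pos rfl, if_pos rfl, if_neg hP]
      split_ifs <;> ring
    · rw [if_neg h, if_neg h]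
      by_cases hP : (i:ℕ) + (j:ℕ) + 1 = 2*m
      · rw [if_pos hP, if_pos hP]; ring
      · rw [if_neg hP, if_neg hP]; ring
  constructor
  · -- commutation
    rw [hC, add_mul, mul_add, smul_mul_assoc, smul_mul_assoc, mul_smul_comm, mul_smul_comm]
    ext i j
    simp only [Matrix.add_apply, Matrix.smul_apply, smul_eq_mul]
    rw [Pmat_mul, mul_Pmat]
    show _ * (Fmat m * Hop m t z) i j + _ = _ * (Hop m t z * Fmat m) i j + _
    rw [Fmat, Matrix.diagonal_mul, Matrix.mul_diagonal]
    have hi := i.isLt; have hj := j.isLt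
    have hir : (i.rev : ℕ) = 2*m - ((i:ℕ) + 1) := Fin.val_rev i
    have hjr : (j.rev : ℕ) = 2*m - ((j:ℕ) + 1) := Fin.val_rev j
    have k := key m t z γ htt hzz hzm hm (i:ℕ) (j:ℕ) (i.rev:ℕ) (j.rev:ℕ)
      (by omega) (by omega)
    simp only [Hop_apply]
    linear_combination (((s:ℝ):ℂ))⁻¹ * k
  · -- involution
    rw [hC]
    have hsq : ∀ (A B : Matrix (Fin (2*m)) (Fin (2*m)) ℂ) (x y : ℂ), A*A = 1 → B*B = 1 →
        B*A = -(A*B) → (x•A + y•B)*(x•A + y•B)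
          = (x^2 + y^2) • (1 : Matrix (Fin (2*m)) (Fin (2*m)) ℂ) := by
      intro A B x y hA hB hBA
      rw [add_mul, mul_add, mul_add, smul_mul_assoc, smul_mul_assoc, smul_mul_assoc,
        smul_mul_assoc, mul_smul_comm, mul_smul_comm, mul_smul_comm, mul_smul_comm,
        hA, hB, hBA]
      ext i j
      simp only [Matrix.add_apply, Matrix.smul_apply, Matrix.neg_apply, smul_eq_mul,
        Matrix.one_apply]
      split_ifs <;> ring
    rw [hsq _ _ _ _ (Fmat_Fmat m) (Pmat_Pmat m) (Pmat_Fmat m)]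
    have hxy : (Complex.I * (γ:ℂ) / ((s:ℝ):ℂ))^2 + (((t m : ℝ):ℂ) / ((s:ℝ):ℂ))^2 = 1 := by
      rw [div_pow, div_pow, ← add_div, div_eq_one_iff_eq (pow_ne_zero 2 hs0), hs2]
      linear_combination ((γ:ℝ):ℂ)^2 * Complex.I_sq
    rw [hxy, one_smul]
end

section
/- If γ > t_m, then every eigenvalue λ of H has nonzero imaginary part; in particular H has no real eigenvalue. -/
open Matrix Complex

lemma sum_fin_ite (n c : ℕ) (f : ℕ → ℂ) :
    ∑ j : Fin n, (if (j : ℕ) = c then f (j : ℕ) else 0) = if c < n then f c else 0 := by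
  rcases lt_or_ge c n with h | h
  · rw [Fintype.sum_eq_single (⟨c, h⟩ : Fin n)]
    · simp [h]
    · intro j hj
      simp only [ite_eq_right_iff]
      intro hc
      exact absurd (Fin.ext hc) hj
  · rw [if_neg (by omega)]
    apply Finset.sum_eq_zero
    intro j _
    rw [if_neg (by omega)]

lemma row_eq (m : ℕ) (t : ℕ → ℝ) (z : ℕ → ℂ) (μ : ℂ) (v : Fin (2*m) → ℂ)
    (hv : (Hop m t z).mulVec v = μ • v) (u : ℕ → ℂ)
    (hu : ∀ j : Fin (2*m), u ((j : ℕ) + 1) = v j)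
    (hu0 : ∀ j, j = 0 ∨ 2*m < j → u j = 0) :
    ∀ k, 1 ≤ k → k ≤ 2*m →
      (t (k-1) : ℂ) * u (k-1) + z k * u k + (t k : ℂ) * u (k+1) = μ * u k := by
  intro k hk1 hk2
  set i : Fin (2*m) := ⟨k-1, by omega⟩ with hi
  have hrow : (Hop m t z).mulVec v i = μ • v i := by rw [hv]; rfl
  have hsum : ∑ j : Fin (2*m), Hop m t z i j * v j = μ * v i := by
    simpa [Matrix.mulVec, dotProduct] using hrow
  have hterm : ∀ j : Fin (2*m), Hop m t z i j * v j =
      (if (j : ℕ) = k - 2 ∧ 2 ≤ k then (t (k-1) : ℂ) * u ((j:ℕ)+1) else 0)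
      + (if (j : ℕ) = k - 1 then z k * u ((j:ℕ)+1) else 0)
      + (if (j : ℕ) = k then (t k : ℂ) * u ((j:ℕ)+1) else 0) := by
    intro j
    rw [hu j]
    simp only [Hop, hi]
    rcases eq_or_ne ((j : ℕ)) (k-1) with h1 | h1
    · rw [if_pos (by omega)]
      rw [if_neg (by omega), if_pos h1, if_neg (by omega)]
      have : (k : ℕ) - 1 + 1 = k := by omega
      rw [this]
      ring
    · rw [if_neg (by omega)]
      rcases eq_or_ne ((j : ℕ)) k with h2 | h2
      · rw [if_pos (by omega), if_neg (by omega), if_neg h1, if_pos h2]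
        have : (k : ℕ) - 1 + 1 = k := by omega
        rw [this]
        ring
      · rw [if_neg (by omega)]
        rcases eq_or_ne ((j : ℕ) + 1) (k - 1) with h3 | h3
        · have h4 : (j : ℕ) = k - 2 ∧ 2 ≤ k := by omega
          rw [if_pos h3, if_pos h4, if_neg h1, if_neg h2]
          have : (j : ℕ) + 1 = k - 1 := h3
          rw [this]
          ring
        · rw [if_neg h3, if_neg (by omega), if_neg h1, if_neg h2]
          ring
  rw [Finset.sum_congr rfl (fun j _ => hterm j), Finset.sum_add_distrib,
    Finset.sum_add_distrib] at hsum
  have h1 : ∑ j : Fin (2*m), (if (j : ℕ) = k - 2 ∧ 2 ≤ k then (t (k-1) : ℂ) * u ((j:ℕ)+1) else 0)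
      = (t (k-1) : ℂ) * u (k-1) := by
    rcases lt_or_ge k 2 with hk | hk
    · have hk1' : k = 1 := by omega
      have : ∀ j : Fin (2*m), (if (j : ℕ) = k - 2 ∧ 2 ≤ k then (t (k-1) : ℂ) * u ((j:ℕ)+1) else 0) = 0 := by
        intro j; rw [if_neg (by omega)]
      rw [Finset.sum_congr rfl (fun j _ => this j), Finset.sum_const_zero]
      rw [hk1']
      simp [hu0 0 (Or.inl rfl)]
    · have : ∀ j : Fin (2*m), (if (j : ℕ) = k - 2 ∧ 2 ≤ k then (t (k-1) : ℂ) * u ((j:ℕ)+1) else 0)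
          = (if (j : ℕ) = k - 2 then (t (k-1) : ℂ) * u ((j:ℕ)+1) else 0) := by
        intro j
        rcases eq_or_ne ((j:ℕ)) (k-2) with h | h
        · rw [if_pos ⟨h, hk⟩, if_pos h]
        · rw [if_neg (by tauto), if_neg h]
      rw [Finset.sum_congr rfl (fun j _ => this j),
        sum_fin_ite (2*m) (k-2) (fun x => (t (k-1) : ℂ) * u (x+1))]
      rw [if_pos (by omega)]
      have : k - 2 + 1 = k - 1 := by omega
      rw [this]
  have h2 : ∑ j : Fin (2*m), (if (j : ℕ) = k - 1 then z k * u ((j:ℕ)+1) else 0) = z k * u k := by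
    rw [sum_fin_ite (2*m) (k-1) (fun x => z k * u (x+1)), if_pos (by omega)]
    have : k - 1 + 1 = k := by omega
    rw [this]
  have h3 : ∑ j : Fin (2*m), (if (j : ℕ) = k then (t k : ℂ) * u ((j:ℕ)+1) else 0)
      = (t k : ℂ) * u (k+1) := by
    rw [sum_fin_ite (2*m) k (fun x => (t k : ℂ) * u (x+1))]
    rcases lt_or_ge k (2*m) with h | h
    · rw [if_pos h]
    · rw [if_neg (by omega), hu0 (k+1) (by omega), mul_zero]
  rw [h1, h2, h3] at hsum
  have hvi : v i = u k := by
    rw [← hu i]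
    congr 1
    simp only [hi]
    omega
  rw [hvi] at hsum
  exact hsum

set_option maxHeartbeats 2000000 in
theorem stmt6 (m : ℕ) (hm : 1 ≤ m) (t : ℕ → ℝ) (z : ℕ → ℂ)
    (ht0 : ∀ j, 1 ≤ j → j ≤ 2*m - 1 → t j ≠ 0)
    (htsym : ∀ j, 1 ≤ j → j ≤ 2*m - 1 → t j = t (2*m - j))
    (htm : 0 < t m)
    (hzreal : ∀ j, 1 ≤ j → j ≤ 2*m → j ≠ m → j ≠ m + 1 → (z j).im = 0)
    (hzsym : ∀ j, 1 ≤ j → j ≤ 2*m → z (2*m + 1 - j) = (starRingEnd ℂ) (z j))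
    (hγ : 0 ≤ (z m).im)
    (hγgt : t m < (z m).im) :
    ∀ μ ∈ spectrum ℂ (Hop m t z), μ.im ≠ 0 := by
  intro μ hμ h0
  -- extract an eigenvector
  obtain ⟨v, hv0, hv⟩ : ∃ v : Fin (2*m) → ℂ, v ≠ 0 ∧ (Hop m t z).mulVec v = μ • v := by
    rw [spectrum.mem_iff, Matrix.isUnit_iff_isUnit_det, isUnit_iff_ne_zero, not_ne_iff] at hμ
    obtain ⟨v, hv0, hv⟩ := Matrix.exists_mulVec_eq_zero_iff.mpr hμ
    refine ⟨v, hv0, ?_⟩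
    rw [Matrix.sub_mulVec, Algebra.algebraMap_eq_smul_one, Matrix.smul_mulVec,
      Matrix.one_mulVec] at hv
    rw [← sub_eq_zero.mp hv]
  set u : ℕ → ℂ := fun j => if h : 1 ≤ j ∧ j ≤ 2*m then v ⟨j-1, by omega⟩ else 0 with hudef
  have hu : ∀ j : Fin (2*m), u ((j : ℕ) + 1) = v j := by
    intro j
    simp only [hudef]
    rw [dif_pos (show 1 ≤ (j:ℕ)+1 ∧ (j:ℕ)+1 ≤ 2*m from ⟨by omega, by omega⟩)]
    exact congrArg v (Fin.ext (by simp))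
  have hu0 : ∀ j, j = 0 ∨ 2*m < j → u j = 0 := by
    intro j hj
    simp only [hudef]
    rw [dif_neg (by omega)]
  have E := row_eq m t z μ v hv u hu hu0
  -- u 1 ≠ 0
  have hune : ∃ k, u k ≠ 0 := by
    obtain ⟨i, hi⟩ := Function.ne_iff.mp hv0
    exact ⟨(i : ℕ) + 1, by rw [hu i]; simpa using hi⟩
  have hu1 : u 1 ≠ 0 := by
    intro h1
    have hz : ∀ j, u j = 0 := by
      intro j
      induction j using Nat.strong_induction_on with
      | _ j ih =>
        by_cases hj0 : j = 0
        · exact hu0 j (Or.inl hj0)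
        by_cases hj1 : j = 1
        · rw [hj1]; exact h1
        by_cases hjn : 2*m < j
        · exact hu0 j (Or.inr hjn)
        have e := E (j-1) (by omega) (by omega)
        rw [ih (j-1) (by omega), ih (j-1-1) (by omega)] at e
        have he : (t (j-1) : ℂ) * u (j-1+1) = 0 := by linear_combination e
        have ht : (t (j-1) : ℂ) ≠ 0 := by
          exact_mod_cast ht0 (j-1) (by omega) (by omega)
        have := (mul_eq_zero.mp he).resolve_left ht
        have hj' : j - 1 + 1 = j := by omega
        rwa [hj'] at this
    obtain ⟨k, hk⟩ := hune
    exact hk (hz k)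
  -- multiply by conj (u 1)
  set c : ℂ := (starRingEnd ℂ) (u 1) with hcdef
  set w : ℕ → ℂ := fun j => c * u j with hwdef
  have Ew : ∀ k, 1 ≤ k → k ≤ 2*m →
      (t (k-1) : ℂ) * w (k-1) + z k * w k + (t k : ℂ) * w (k+1) = μ * w k := by
    intro k a b
    simp only [hwdef]
    linear_combination c * (E k a b)
  have hw0 : ∀ j, j = 0 ∨ 2*m < j → w j = 0 := by
    intro j hj
    simp only [hwdef]
    rw [hu0 j hj, mul_zero]
  have hw1 : w 1 = ((Complex.normSq (u 1) : ℝ) : ℂ) := by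
    simp only [hwdef, hcdef]
    rw [mul_comm, Complex.mul_conj]
  have hw1im : (w 1).im = 0 := by rw [hw1]; exact Complex.ofReal_im _
  have hw1ne : w 1 ≠ 0 := by
    rw [hw1]
    simp [Complex.normSq_eq_zero, hu1]
  -- component equations
  have Ecomp : ∀ k, 1 ≤ k → k ≤ 2*m →
      (t (k-1) * (w (k-1)).re + (z k).re * (w k).re - (z k).im * (w k).im
        + t k * (w (k+1)).re = μ.re * (w k).re)
      ∧ (t (k-1) * (w (k-1)).im + (z k).re * (w k).im + (z k).im * (w k).re
        + t k * (w (k+1)).im = μ.re * (w k).im) := by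
    intro k a b
    have e := Ew k a b
    rw [Complex.ext_iff] at e
    obtain ⟨e1, e2⟩ := e
    simp only [Complex.add_re, Complex.add_im, Complex.mul_re, Complex.mul_im,
      Complex.ofReal_re, Complex.ofReal_im, zero_mul, mul_zero, sub_zero, add_zero,
      zero_add, h0] at e1 e2
    constructor
    · linarith
    · linarith
  -- entries 0..m are real
  have hreal : ∀ j, j ≤ m → (w j).im = 0 := by
    intro j
    induction j using Nat.strong_induction_on with
    | _ j ih =>
      intro hjm
      by_cases hj0 : j = 0
      · rw [hj0, hw0 0 (Or.inl rfl)]; rfl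
      by_cases hj1 : j = 1
      · rw [hj1]; exact hw1im
      have e2 := (Ecomp (j-1) (by omega) (by omega)).2
      have i1 : (w (j-1)).im = 0 := ih (j-1) (by omega) (by omega)
      have i2 : (w (j-1-1)).im = 0 := ih (j-1-1) (by omega) (by omega)
      have hz' : (z (j-1)).im = 0 := hzreal (j-1) (by omega) (by omega) (by omega) (by omega)
      have hj' : j - 1 + 1 = j := by omega
      rw [hj', i1, i2, hz'] at e2
      have ht : t (j-1) ≠ 0 := ht0 (j-1) (by omega) (by omega)
      have : t (j-1) * (w j).im = 0 := by linarith
      exact (mul_eq_zero.mp this).resolve_left ht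
  -- the Wronskian-type quantity
  set S : ℕ → ℝ := fun k => t k * ((w k).re * (w (k+1)).im - (w k).im * (w (k+1)).re) with hSdef
  have hStep : ∀ k, 1 ≤ k → k ≤ 2*m →
      S (k-1) = S k + (z k).im * ((w k).re^2 + (w k).im^2) := by
    intro k a b
    obtain ⟨e1, e2⟩ := Ecomp k a b
    simp only [hSdef]
    have hk' : k - 1 + 1 = k := by omega
    rw [hk']
    linear_combination (w k).im * e1 - (w k).re * e2
  have hSn : S (2*m) = 0 := by
    have h1 : w (2*m+1) = 0 := hw0 _ (Or.inr (by omega))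
    simp only [hSdef]
    rw [h1]
    simp
  have hStail : ∀ d, ∀ j, j = 2*m - d → m+1 ≤ j → j ≤ 2*m → S j = 0 := by
    intro d
    induction d with
    | zero =>
      intro j hj _ _
      have : j = 2*m := by omega
      rw [this]
      exact hSn
    | succ d ihd =>
      intro j hj hj1 hj2
      by_cases hje : j = 2*m
      · rw [hje]; exact hSn
      have hjlt : j < 2*m := by omega
      have hs := hStep (j+1) (by omega) (by omega)
      have hz' : (z (j+1)).im = 0 := hzreal (j+1) (by omega) (by omega) (by omega) (by omega)
      have hS1 : S (j+1) = 0 := ihd (j+1) (by omega) (by omega) (by omega)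
      have hj' : j + 1 - 1 = j := by omega
      rw [hj', hz', hS1] at hs
      simpa using hs
  have hzm1 : (z (m+1)).im = -(z m).im := by
    have hs := hzsym m hm (by omega)
    have h' : 2*m+1-m = m+1 := by omega
    rw [h'] at hs
    rw [hs, Complex.conj_im]
  have hSm : S m = -(z m).im * ((w (m+1)).re^2 + (w (m+1)).im^2) := by
    have hs := hStep (m+1) (by omega) (by omega)
    have h' : m+1-1 = m := by omega
    rw [h', hzm1, hStail (m-1) (m+1) (by omega) le_rfl (by omega)] at hs
    linarith
  have hwmim : (w m).im = 0 := hreal m le_rfl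
  have hwm1im : (w (m-1)).im = 0 := hreal (m-1) (by omega)
  have e2m := (Ecomp m hm (by omega)).2
  rw [hwmim, hwm1im] at e2m
  have hkey : t m * (w (m+1)).im = -(z m).im * (w m).re := by linarith
  have hSmval : S m = (w m).re * (t m * (w (m+1)).im) := by
    simp only [hSdef]
    rw [hwmim]
    ring
  have hγpos : 0 < (z m).im := lt_trans htm hγgt
  have hnsq : (w (m+1)).re^2 + (w (m+1)).im^2 = (w m).re^2 := by
    have heq : (z m).im * ((w (m+1)).re^2 + (w (m+1)).im^2) = (z m).im * (w m).re^2 := by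
      linear_combination hSm - hSmval - (w m).re * hkey
    exact mul_left_cancel₀ (ne_of_gt hγpos) heq
  have him2 : (t m)^2 * (w (m+1)).im^2 = ((z m).im)^2 * ((w (m+1)).re^2 + (w (m+1)).im^2) := by
    rw [hnsq]
    linear_combination (t m * (w (m+1)).im - (z m).im * (w m).re) * hkey
  have hsqlt : (t m)^2 < ((z m).im)^2 := by nlinarith
  have hprod : ((z m).im)^2 * (w (m+1)).re^2 = ((t m)^2 - ((z m).im)^2) * (w (m+1)).im^2 := by
    linear_combination -him2
  have hre0 : (w (m+1)).re = 0 := by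
    have hle : ((z m).im)^2 * (w (m+1)).re^2 ≤ 0 := by
      nlinarith [sq_nonneg (w (m+1)).im]
    have hre2 : (w (m+1)).re^2 ≤ 0 := by nlinarith [mul_pos hγpos hγpos]
    exact sq_eq_zero_iff.mp (le_antisymm hre2 (sq_nonneg _))
  have him0 : (w (m+1)).im = 0 := by
    have h1 : ((t m)^2 - ((z m).im)^2) * (w (m+1)).im^2 = 0 := by
      rw [← hprod, hre0]
      ring
    have h2 : (w (m+1)).im^2 = 0 :=
      (mul_eq_zero.mp h1).resolve_left (by nlinarith)
    exact sq_eq_zero_iff.mp h2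
  have hwm1zero : w (m+1) = 0 := Complex.ext hre0 him0
  have hwmre : (w m).re = 0 := by
    have h : (w m).re^2 = 0 := by rw [← hnsq, hre0, him0]; ring
    exact sq_eq_zero_iff.mp h
  have hwmzero : w m = 0 := Complex.ext hwmre hwmim
  -- propagate zero down to w 1
  have hdown : ∀ j, j ≤ m - 1 → w (m - j) = 0 ∧ w (m - j + 1) = 0 := by
    intro j
    induction j with
    | zero =>
      intro _
      simp only [Nat.sub_zero]
      exact ⟨hwmzero, hwm1zero⟩
    | succ j ihj =>
      intro hjm
      obtain ⟨hA, hB⟩ := ihj (by omega)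
      have e := Ew (m-j) (by omega) (by omega)
      rw [hA, hB] at e
      have he : (t (m-j-1) : ℂ) * w (m-j-1) = 0 := by linear_combination e
      have htc : (t (m-j-1) : ℂ) ≠ 0 := by
        exact_mod_cast ht0 (m-j-1) (by omega) (by omega)
      have hw' : w (m-j-1) = 0 := (mul_eq_zero.mp he).resolve_left htc
      constructor
      · have h' : m - (j+1) = m - j - 1 := by omega
        rw [h']
        exact hw'
      · have h' : m - (j+1) + 1 = m - j := by omega
        rw [h']
        exact hA
  have hw1z : w 1 = 0 := by
    have h := (hdown (m-1) le_rfl).1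
    have h' : m - (m-1) = 1 := by omega
    rwa [h'] at h
  exact hw1ne hw1z
end

section
/- Let H_{m−1} denote the top-left (m−1)×(m−1) submatrix of H (with det(λ·1_0 − H_0) interpreted as the constant polynomial 1 when m = 1), and let H_m^R denote the top-left m×m submatrix of H with its (m,m) entry z_m replaced by Δ = Re z_m. Then, as an identity of polynomials in λ, det(λ·1_n − H) = (γ² − t_m²)·det(λ·1_{m−1} − H_{m−1})² + det(λ·1_m − H_m^R)². -/
open Matrix Complex

section TridInfra
open Matrix Polynomial

variable {R : Type*} {S : Type*} [CommRing R] [CommRing S]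

def trid (a b c : ℕ → R) (n : ℕ) : Matrix (Fin n) (Fin n) R :=
  fun i j =>
    if (i : ℕ) = (j : ℕ) then a i
    else if (i : ℕ) + 1 = (j : ℕ) then b i
    else if (j : ℕ) + 1 = (i : ℕ) then c j
    else 0

lemma trid_apply_nat (a b c : ℕ → R) (n : ℕ) (i j : Fin n) (i' j' : ℕ)
    (hi : (i : ℕ) = i') (hj : (j : ℕ) = j') :
    trid a b c n i j = (if i' = j' then a i'
      else if i' + 1 = j' then b i' else if j' + 1 = i' then c j' else 0) := by
  subst hi hj; rfl

lemma val_succAbove {n : ℕ} (p : Fin (n+1)) (i : Fin n) :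
    ((p.succAbove i : Fin (n+1)) : ℕ) = if (i : ℕ) < p then (i : ℕ) else (i : ℕ) + 1 := by
  rw [Fin.succAbove]
  split_ifs with h1 h2 h3
  · rfl
  · exact absurd (by simpa [Fin.lt_def] using h1) h2
  · exact absurd (by simpa [Fin.lt_def] using h3) h1
  · rfl

lemma det_trid_rec' (a b c : ℕ → R) (n : ℕ) :
    (trid a b c (n+2)).det =
      a (n+1) * (trid a b c (n+1)).det - b n * c n * (trid a b c n).det := by
  rw [Matrix.det_succ_row (trid a b c (n+2)) (Fin.last (n+1))]
  rw [Fin.sum_univ_castSucc, Fin.sum_univ_castSucc]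
  have hz : ∀ j : Fin n, (-1 : R) ^ ((Fin.last (n+1) : ℕ) + ((j.castSucc.castSucc : Fin (n+2)) : ℕ))
      * trid a b c (n+2) (Fin.last (n+1)) j.castSucc.castSucc
      * ((trid a b c (n+2)).submatrix (Fin.last (n+1)).succAbove j.castSucc.castSucc.succAbove).det = 0 := by
    intro j
    have hj := j.isLt
    have : trid a b c (n+2) (Fin.last (n+1)) j.castSucc.castSucc = 0 := by
      rw [trid_apply_nat a b c (n+2) (Fin.last (n+1)) j.castSucc.castSucc (n+1) (j : ℕ) rfl rfl]
      split_ifs <;> first | rfl | omega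
    rw [this]; ring
  rw [Finset.sum_eq_zero (fun j _ => hz j), zero_add]
  -- the a-term
  have hA : ((trid a b c (n+2)).submatrix (Fin.last (n+1)).succAbove
      (Fin.last (n+1)).succAbove).det = (trid a b c (n+1)).det := by
    congr 1
    ext i j
    rw [Matrix.submatrix_apply, Fin.succAbove_last,
      trid_apply_nat a b c (n+2) _ _ (i : ℕ) (j : ℕ) (by simp) (by simp)]
    rfl
  have hAe : trid a b c (n+2) (Fin.last (n+1)) (Fin.last (n+1)) = a (n+1) := by
    rw [trid_apply_nat a b c (n+2) (Fin.last (n+1)) (Fin.last (n+1)) (n+1) (n+1) rfl rfl]; simp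
  -- the c-term
  set N := (trid a b c (n+2)).submatrix (Fin.last (n+1)).succAbove
      ((Fin.last n).castSucc).succAbove with hN
  have hNentry : ∀ (i : Fin (n+1)) (j : Fin (n+1)), N i j =
      (if (i:ℕ) = (if (j:ℕ) < n then (j:ℕ) else (j:ℕ)+1) then a (i:ℕ)
        else if (i:ℕ) + 1 = (if (j:ℕ) < n then (j:ℕ) else (j:ℕ)+1) then b (i:ℕ)
        else if (if (j:ℕ) < n then (j:ℕ) else (j:ℕ)+1) + 1 = (i:ℕ) then
          c (if (j:ℕ) < n then (j:ℕ) else (j:ℕ)+1) else 0) := by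
    intro i j
    rw [hN, Matrix.submatrix_apply, Fin.succAbove_last,
      trid_apply_nat a b c (n+2) _ _ (i:ℕ) (if (j:ℕ) < n then (j:ℕ) else (j:ℕ)+1) (by simp)
        (by rw [val_succAbove]; simp)]
  have hCe : trid a b c (n+2) (Fin.last (n+1)) ((Fin.last n).castSucc) = c n := by
    rw [trid_apply_nat a b c (n+2) (Fin.last (n+1)) ((Fin.last n).castSucc) (n+1) n rfl (by simp)]
    split_ifs <;> first | rfl | omega
  have hNdet : N.det = b n * (trid a b c n).det := by
    rw [Matrix.det_succ_column N (Fin.last n), Fin.sum_univ_castSucc]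
    have hz2 : ∀ i : Fin n, (-1:R) ^ ((i.castSucc : ℕ) + (Fin.last n : ℕ))
        * N i.castSucc (Fin.last n)
        * (N.submatrix i.castSucc.succAbove (Fin.last n).succAbove).det = 0 := by
      intro i
      have hi := i.isLt
      have : N i.castSucc (Fin.last n) = 0 := by
        rw [hNentry]
        simp only [Fin.coe_castSucc, Fin.val_last]
        split_ifs <;> first | rfl | omega
      rw [this]; ring
    rw [Finset.sum_eq_zero (fun i _ => hz2 i), zero_add]
    have h1 : N (Fin.last n) (Fin.last n) = b n := by
      rw [hNentry]; simp
    have h2 : (N.submatrix (Fin.last n).succAbove (Fin.last n).succAbove).det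
        = (trid a b c n).det := by
      congr 1
      ext i j
      rw [Matrix.submatrix_apply, Fin.succAbove_last, hNentry,
        trid_apply_nat a b c n i j (i:ℕ) (j:ℕ) rfl rfl]
      have hj := j.isLt
      simp only [Fin.coe_castSucc]
      rw [if_pos j.isLt]
    rw [h1, h2, Fin.val_last]
    have : (-1:R) ^ (n + n) = 1 := by
      rw [show n + n = 2 * n by ring, pow_mul]; simp
    rw [this, one_mul]
  rw [hA, hAe, hCe, hNdet]
  simp only [Fin.val_last, Fin.coe_castSucc]
  have e1 : (-1:R) ^ (n + 1 + (n+1)) = 1 := by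
    rw [show n+1+(n+1) = 2*(n+1) by ring, pow_mul]; simp
  have e2 : (-1:R) ^ (n + 1 + n) = -1 := by
    rw [show n+1+n = 2*n+1 by ring, pow_succ, pow_mul]; simp
  rw [e1, e2]; ring

lemma det_trid_zero' (a b c : ℕ → R) : (trid a b c 0).det = 1 := by
  simp [Matrix.det_fin_zero]

lemma det_trid_one' (a b c : ℕ → R) : (trid a b c 1).det = a 0 := by
  simp [Matrix.det_fin_one, trid]

lemma trid_congr' {a b c a' b' c' : ℕ → R} {n : ℕ}
    (ha : ∀ i < n, a i = a' i) (hb : ∀ i, i + 1 < n → b i = b' i)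
    (hc : ∀ i, i + 1 < n → c i = c' i) : trid a b c n = trid a' b' c' n := by
  ext i j
  have hi := i.isLt
  have hj := j.isLt
  simp only [trid]
  split_ifs with h1 h2 h3
  · exact ha i (by omega)
  · exact hb i (by omega)
  · exact hc j (by omega)
  · rfl

lemma det_trid_rev' (a b c : ℕ → R) (n : ℕ) :
    (trid a b c n).det =
      (trid (fun i => a (n-1-i)) (fun i => c (n-2-i)) (fun i => b (n-2-i)) n).det := by
  rw [← Matrix.det_submatrix_equiv_self Fin.revPerm (trid a b c n)]
  congr 1
  ext i j
  have hi := i.isLt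
  have hj := j.isLt
  simp only [Matrix.submatrix_apply, Fin.revPerm_apply, trid, Fin.val_rev]
  split_ifs with h1 h2 h3 h4 h4 h5 h5 <;> first | rfl | omega | (exfalso; omega) | (congr 1; omega)

lemma trid_map' (f : R →+* S) (a b c : ℕ → R) (n : ℕ) :
    (trid a b c n).map f = trid (fun i => f (a i)) (fun i => f (b i)) (fun i => f (c i)) n := by
  ext i j
  simp only [Matrix.map_apply, trid]
  split_ifs <;> simp

lemma det_trid_last' (a a₂ b c : ℕ → R) (k : ℕ) (h : ∀ i < k, a i = a₂ i) :
    (trid a b c (k+1)).det =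
      (trid a₂ b c (k+1)).det + (a k - a₂ k) * (trid a b c k).det := by
  match k with
  | 0 => rw [det_trid_one', det_trid_one', det_trid_zero']; ring
  | (k'+1) =>
      rw [det_trid_rec' a b c k', det_trid_rec' a₂ b c k']
      have e1 : trid a b c (k'+1) = trid a₂ b c (k'+1) :=
        trid_congr' (fun i hi => h i (by omega)) (fun _ _ => rfl) (fun _ _ => rfl)
      have e2 : trid a b c k' = trid a₂ b c k' :=
        trid_congr' (fun i hi => h i (by omega)) (fun _ _ => rfl) (fun _ _ => rfl)
      rw [e1, e2]; ring

lemma det_trid_split' (a b c : ℕ → R) (p q : ℕ) :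
    (trid a b c ((p+1)+(q+1))).det =
      (trid a b c (p+1)).det
        * (trid (fun i => a (i+(p+1))) (fun i => b (i+(p+1))) (fun i => c (i+(p+1))) (q+1)).det
      - b p * c p * (trid a b c p).det
        * (trid (fun i => a (i+(p+2))) (fun i => b (i+(p+2))) (fun i => c (i+(p+2))) q).det := by
  induction q using Nat.strong_induction_on with
  | _ q ih =>
    match q with
    | 0 =>
      rw [show (p+1)+(0+1) = p+2 from by ring]
      rw [show (p+2:ℕ) = p+0+2 from by ring, det_trid_rec' a b c (p+0)]
      rw [det_trid_one', det_trid_zero']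
      simp only [zero_add, Nat.add_zero]
      ring
    | 1 =>
      rw [show (p+1)+(1+1) = (p+1)+2 from by ring, det_trid_rec' a b c (p+1)]
      rw [show (p+1)+1 = p+0+2 from by ring, det_trid_rec' a b c (p+0)]
      rw [show (1:ℕ)+1 = 0+2 from rfl, det_trid_rec', det_trid_one', det_trid_one', det_trid_zero']
      simp only [zero_add, Nat.add_zero]
      ring
    | (k+2) =>
      rw [show (p+1)+(k+2+1) = (p+k+2)+2 from by ring, det_trid_rec' a b c (p+k+2)]
      rw [show p+k+2+1 = p+1+(k+1+1) from by ring, ih (k+1) (by omega)]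
      rw [show p+k+2 = p+1+(k+0+1) from by ring, ih (k+0) (by omega)]
      rw [show k+2+1 = k+1+2 from by ring,
        det_trid_rec' (fun i => a (i+(p+1))) (fun i => b (i+(p+1))) (fun i => c (i+(p+1))) (k+1),
        det_trid_rec' (fun i => a (i+(p+2))) (fun i => b (i+(p+2))) (fun i => c (i+(p+2))) k]
      simp only [Nat.add_zero]
      ring_nf

end TridInfra


/-- The top-left `(m−1) × (m−1)` submatrix of `H`. -/
noncomputable def HopSub (m : ℕ) (t : ℕ → ℝ) (z : ℕ → ℂ) :
    Matrix (Fin (m-1)) (Fin (m-1)) ℂ :=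
  (Hop m t z).submatrix (Fin.castLE (by omega)) (Fin.castLE (by omega))

/-- The top-left `m × m` submatrix of `H` with its `(m,m)` entry `z m`
replaced by `Δ = Re (z m)`. -/
noncomputable def HmR (m : ℕ) (t : ℕ → ℝ) (z : ℕ → ℂ) :
    Matrix (Fin m) (Fin m) ℂ :=
  fun i j =>
    if (i : ℕ) = m - 1 ∧ (j : ℕ) = m - 1 then (((z m).re : ℝ) : ℂ)
    else Hop m t z (Fin.castLE (by omega) i) (Fin.castLE (by omega) j)

open Polynomial in
theorem stmt7 (m : ℕ) (hm : 1 ≤ m) (t : ℕ → ℝ) (z : ℕ → ℂ)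
    (ht0 : ∀ j, 1 ≤ j → j ≤ 2*m - 1 → t j ≠ 0)
    (htsym : ∀ j, 1 ≤ j → j ≤ 2*m - 1 → t j = t (2*m - j))
    (htm : 0 < t m)
    (hzreal : ∀ j, 1 ≤ j → j ≤ 2*m → j ≠ m → j ≠ m + 1 → (z j).im = 0)
    (hzsym : ∀ j, 1 ≤ j → j ≤ 2*m → z (2*m + 1 - j) = (starRingEnd ℂ) (z j))
    (hγ : 0 ≤ (z m).im) :
    (Hop m t z).charpoly =
      Polynomial.C ((((z m).im^2 - (t m)^2 : ℝ)) : ℂ) * (HopSub m t z).charpoly ^ 2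
        + (HmR m t z).charpoly ^ 2 := by
  obtain ⟨m', rfl⟩ : ∃ m', m = m' + 1 := ⟨m - 1, by omega⟩
  set A : ℕ → ℂ[X] := fun i => X - C (z (i+1)) with hA
  set B : ℕ → ℂ[X] := fun i => -C ((t (i+1) : ℝ) : ℂ) with hB
  set A' : ℕ → ℂ[X] := fun i =>
    if i = m' then X - C (((z (m'+1)).re : ℝ) : ℂ) else A i with hA'
  set ψ : ℂ[X] →+* ℂ[X] := Polynomial.mapRingHom (starRingEnd ℂ) with hψ
  have hψX : ∀ w : ℂ, ψ (X - C w) = X - C ((starRingEnd ℂ) w) := by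
    intro w
    simp [hψ, Polynomial.map_sub]
  have hψCC : ∀ w : ℂ, ψ (C w) = C ((starRingEnd ℂ) w) := by
    intro w
    simp [hψ]
  have hψC : ∀ w : ℂ, ψ (-C w) = -C ((starRingEnd ℂ) w) := by
    intro w
    rw [_root_.map_neg, hψCC]
  have tridDiag : ∀ (n : ℕ) (a b c : ℕ → ℂ[X]) (k : Fin n), trid a b c n k k = a (k : ℕ) := by
    intro n a b c k
    simp [trid]
  have tridOff : ∀ (n : ℕ) (a b c : ℕ → ℂ[X]) (k l : Fin n), ((k:ℕ) ≠ (l:ℕ)) →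
      trid a b c n k l =
        (if (k:ℕ)+1 = (l:ℕ) then b (k:ℕ) else if (l:ℕ)+1 = (k:ℕ) then c (l:ℕ) else 0) := by
    intro n a b c k l h
    simp only [trid, if_neg h]
  -- charpoly identifications
  have hH : (Hop (m'+1) t z).charpoly = (trid A B B (2*(m'+1))).det := by
    show (charmatrix (Hop (m'+1) t z)).det = _
    congr 1
    refine Matrix.ext fun i j => ?_
    by_cases hij : i = j
    · subst hij
      rw [charmatrix_apply_eq, tridDiag]
      have : Hop (m'+1) t z i i = z ((i:ℕ)+1) := by simp [Hop]
      rw [this]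
    · rw [charmatrix_apply_ne _ _ _ hij]
      have hij' : (i:ℕ) ≠ (j:ℕ) := fun h => hij (Fin.ext h)
      rw [tridOff _ _ _ _ _ _ hij']
      have : Hop (m'+1) t z i j = (if (i:ℕ)+1 = (j:ℕ) then ((t ((i:ℕ)+1):ℝ):ℂ)
          else if (j:ℕ)+1 = (i:ℕ) then ((t ((j:ℕ)+1):ℝ):ℂ) else 0) := by
        simp only [Hop, if_neg hij']
      rw [this]
      split_ifs <;> simp [hB]
  have hSub : (HopSub (m'+1) t z).charpoly = (trid A B B m').det := by
    show (charmatrix (HopSub (m'+1) t z)).det = (trid A B B (m'+1-1)).det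
    congr 1
    refine Matrix.ext fun i j => ?_
    by_cases hij : i = j
    · subst hij
      rw [charmatrix_apply_eq, tridDiag]
      have : HopSub (m'+1) t z i i = z ((i:ℕ)+1) := by
        simp [HopSub, Hop, Matrix.submatrix_apply]
      rw [this]
    · rw [charmatrix_apply_ne _ _ _ hij]
      have hij' : (i:ℕ) ≠ (j:ℕ) := fun h => hij (Fin.ext h)
      rw [tridOff _ _ _ _ _ _ hij']
      have : HopSub (m'+1) t z i j = (if (i:ℕ)+1 = (j:ℕ) then ((t ((i:ℕ)+1):ℝ):ℂ)
          else if (j:ℕ)+1 = (i:ℕ) then ((t ((j:ℕ)+1):ℝ):ℂ) else 0) := by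
        simp only [HopSub, Hop, Matrix.submatrix_apply, Fin.coe_castLE]
        rw [if_neg hij']
      rw [this]
      split_ifs <;> simp [hB]
  have hR : (HmR (m'+1) t z).charpoly = (trid A' B B (m'+1)).det := by
    show (charmatrix (HmR (m'+1) t z)).det = _
    congr 1
    refine Matrix.ext fun i j => ?_
    have hi := i.isLt
    have hj := j.isLt
    by_cases hij : i = j
    · subst hij
      rw [charmatrix_apply_eq, tridDiag]
      by_cases hlast : (i:ℕ) = m'
      · have : HmR (m'+1) t z i i = (((z (m'+1)).re : ℝ) : ℂ) := by
          simp only [HmR, Nat.add_sub_cancel]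
          rw [if_pos ⟨hlast, hlast⟩]
        rw [this]
        simp [hA', hlast]
      · have : HmR (m'+1) t z i i = z ((i:ℕ)+1) := by
          simp only [HmR, Nat.add_sub_cancel]
          rw [if_neg (by tauto)]
          simp [Hop]
        rw [this]
        simp [hA', hA, hlast]
    · rw [charmatrix_apply_ne _ _ _ hij]
      have hij' : (i:ℕ) ≠ (j:ℕ) := fun h => hij (Fin.ext h)
      rw [tridOff _ _ _ _ _ _ hij']
      have : HmR (m'+1) t z i j = (if (i:ℕ)+1 = (j:ℕ) then ((t ((i:ℕ)+1):ℝ):ℂ)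
          else if (j:ℕ)+1 = (i:ℕ) then ((t ((j:ℕ)+1):ℝ):ℂ) else 0) := by
        simp only [HmR, Nat.add_sub_cancel]
        rw [if_neg (by omega)]
        simp only [Hop, Matrix.submatrix_apply, Fin.coe_castLE]
        rw [if_neg hij']
      rw [this]
      split_ifs <;> simp [hB]
  -- abbreviations
  set p' : ℂ[X] := (trid A B B m').det with hp'
  set pm : ℂ[X] := (trid A B B (m'+1)).det with hpm
  set qm : ℂ[X] := (trid A' B B (m'+1)).det with hqm
  -- the reversed/conjugated right blocks
  have hS1 : (trid (fun i => A (i+(m'+1))) (fun i => B (i+(m'+1)))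
      (fun i => B (i+(m'+1))) (m'+1)).det = ψ pm := by
    rw [det_trid_rev', hpm, RingHom.map_det, RingHom.mapMatrix_apply, trid_map']
    congr 1
    apply trid_congr'
    · intro i hilt
      simp only [hA, hψX]
      rw [show m'+1-1-i+(m'+1)+1 = 2*(m'+1)+1-(i+1) from by omega,
        hzsym (i+1) (by omega) (by omega)]
    · intro i hilt
      simp only [hB, hψC, Complex.conj_ofReal]
      rw [show m'+1-2-i+(m'+1)+1 = 2*(m'+1)-(i+1) from by omega,
        ← htsym (i+1) (by omega) (by omega)]
    · intro i hilt
      simp only [hB, hψC, Complex.conj_ofReal]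
      rw [show m'+1-2-i+(m'+1)+1 = 2*(m'+1)-(i+1) from by omega,
        ← htsym (i+1) (by omega) (by omega)]
  have hS2 : (trid (fun i => A (i+(m'+2))) (fun i => B (i+(m'+2)))
      (fun i => B (i+(m'+2))) m').det = ψ p' := by
    rw [det_trid_rev', hp', RingHom.map_det, RingHom.mapMatrix_apply, trid_map']
    congr 1
    apply trid_congr'
    · intro i hilt
      simp only [hA, hψX]
      rw [show m'-1-i+(m'+2)+1 = 2*(m'+1)+1-(i+1) from by omega,
        hzsym (i+1) (by omega) (by omega)]
    · intro i hilt
      simp only [hB, hψC, Complex.conj_ofReal]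
      rw [show m'-2-i+(m'+2)+1 = 2*(m'+1)-(i+1) from by omega,
        ← htsym (i+1) (by omega) (by omega)]
    · intro i hilt
      simp only [hB, hψC, Complex.conj_ofReal]
      rw [show m'-2-i+(m'+2)+1 = 2*(m'+1)-(i+1) from by omega,
        ← htsym (i+1) (by omega) (by omega)]
  -- reality of the small blocks
  have hrealA : ∀ i < m', ψ (A i) = A i := by
    intro i hilt
    simp only [hA, hψX]
    rw [Complex.conj_eq_iff_im.mpr (hzreal (i+1) (by omega) (by omega) (by omega) (by omega))]
  have hrealB : ∀ (i : ℕ), ψ (B i) = B i := by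
    intro i
    simp only [hB, hψC, Complex.conj_ofReal]
  have hψp' : ψ p' = p' := by
    rw [hp', RingHom.map_det, RingHom.mapMatrix_apply, trid_map']
    congr 1
    exact trid_congr' (fun i hi => hrealA i hi) (fun i _ => hrealB i) (fun i _ => hrealB i)
  have hψq : ψ qm = qm := by
    rw [hqm, RingHom.map_det, RingHom.mapMatrix_apply, trid_map']
    congr 1
    apply trid_congr'
    · intro i hilt
      by_cases hlast : i = m'
      · subst hlast
        simp only [hA', if_pos rfl, hψX, Complex.conj_ofReal]
      · simp only [hA', if_neg hlast]
        exact hrealA i (by omega)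
    · exact fun i _ => hrealB i
    · exact fun i _ => hrealB i
  -- relation pm = qm + C(Δ - z_m) * p'
  set γ : ℝ := (z (m'+1)).im with hγdef
  have hconjval : (starRingEnd ℂ) (-((γ : ℂ) * Complex.I)) = (γ : ℂ) * Complex.I := by
    rw [_root_.map_neg, _root_.map_mul, Complex.conj_ofReal, Complex.conj_I]
    ring
  have hptoq : pm = qm + C (-((γ : ℂ) * Complex.I)) * p' := by
    rw [hpm, hqm, det_trid_last' A A' B B m' (fun i hi => by rw [hA']; simp only []; rw [if_neg (by omega)])]
    congr 1
    rw [← hp']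
    congr 1
    have h1 : A' m' = X - C (((z (m'+1)).re : ℝ) : ℂ) := by simp [hA']
    have h2 : A m' = X - C (z (m'+1)) := rfl
    rw [h1, h2]
    have h3 : ((z (m'+1)).re : ℂ) - z (m'+1) = -((γ:ℂ) * Complex.I) := by
      rw [hγdef]
      have := Complex.re_add_im (z (m'+1))
      push_cast
      linear_combination this
    rw [← h3, _root_.map_sub]
    ring
  have hψpm : ψ pm = qm + C ((γ : ℂ) * Complex.I) * p' := by
    rw [hptoq, _root_.map_add, hψq, _root_.map_mul, hψp', hψCC, hconjval]
  -- assemble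
  rw [hH, hSub, hR]
  rw [show 2*(m'+1) = (m'+1)+(m'+1) from by ring, det_trid_split' A B B m' m']
  rw [← hpm, ← hp', hS1, hS2, hψp', hψpm, hptoq]
  have hI2 : (C Complex.I : ℂ[X])^2 = -1 := by
    rw [← _root_.map_pow, Complex.I_sq, _root_.map_neg, _root_.map_one]
  have hBval : B m' = -C ((t (m'+1) : ℝ) : ℂ) := rfl
  rw [hBval]
  have hcast : (C (((γ^2 - (t (m'+1))^2 : ℝ)) : ℂ) : ℂ[X])
      = (C (γ:ℂ))^2 - (C ((t (m'+1):ℝ):ℂ))^2 := by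
    push_cast
    rw [_root_.map_sub, _root_.map_pow, _root_.map_pow]
  rw [hcast]
  have hexp : (C (-((γ:ℂ) * Complex.I)) : ℂ[X]) = -(C (γ:ℂ) * C Complex.I) := by
    rw [_root_.map_neg, _root_.map_mul]
  have hexp2 : (C ((γ:ℂ) * Complex.I) : ℂ[X]) = C (γ:ℂ) * C Complex.I := _root_.map_mul _ _ _
  rw [hexp, hexp2]
  linear_combination (-1 : ℂ[X]) * (C (γ:ℂ))^2 * p'^2 * hI2
end

section
/- Assume γ = t_m, and let H_m^R denote the top-left m×m submatrix of H with its (m,m) entry z_m replaced by Δ = Re z_m. Then det(λ·1_n − H) = det(λ·1_m − H_m^R)²; in particular the characteristic polynomial of H is the square of a monic degree-m polynomial with real coefficients, and, since H_m^R is a real symmetric matrix, every eigenvalue of H is real and has algebraic multiplicity at least two. -/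
open Matrix Complex Polynomial

section Generic
variable {n : Type*} [Fintype n] [DecidableEq n] {R : Type*} [CommRing R]

lemma charpoly_eval' (M : Matrix n n R) (μ : R) :
    M.charpoly.eval μ = (Matrix.diagonal (fun _ => μ) - M).det := by
  rw [Matrix.charpoly, ← Polynomial.coe_evalRingHom, RingHom.map_det]
  congr 1
  funext i j
  by_cases h : i = j <;>
    simp [Matrix.charmatrix_apply, Matrix.diagonal_apply, h]

lemma mem_spectrum_iff_root' {K : Type*} [Field K] (M : Matrix n n K) (μ : K) :
    μ ∈ spectrum K M ↔ M.charpoly.IsRoot μ := by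
  have h : (algebraMap K (Matrix n n K)) μ - M = Matrix.diagonal (fun _ => μ) - M := by
    rw [Matrix.algebraMap_eq_diagonal]; rfl
  rw [spectrum.mem_iff, h, Matrix.isUnit_iff_isUnit_det, isUnit_iff_ne_zero, not_not,
    Polynomial.IsRoot, charpoly_eval']

lemma charpoly_conj' (S M S' : Matrix n n R) (h1 : S * S' = 1) (h2 : S' * S = 1) :
    (S * M * S').charpoly = M.charpoly := by
  have key : charmatrix (S * M * S') =
      S.map C * charmatrix M * S'.map C := by
    have hd : ∀ (T : Matrix n n R), T.map C * Matrix.diagonal (fun _ => (X:R[X]))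
        = Matrix.diagonal (fun _ => (X:R[X])) * T.map C := by
      intro T
      funext i j
      rw [Matrix.mul_diagonal, Matrix.diagonal_mul, mul_comm]
    have hc : ∀ (T : Matrix n n R), charmatrix T
        = Matrix.diagonal (fun _ => (X:R[X])) - T.map C := by
      intro T; funext i j
      by_cases h : i = j <;>
        simp [Matrix.charmatrix_apply, Matrix.diagonal_apply, h]
    rw [hc, hc, Matrix.mul_sub, Matrix.sub_mul, hd, Matrix.map_mul, Matrix.map_mul,
      mul_assoc]
    congr 1
    rw [mul_assoc, ← Matrix.map_mul, h1,
      Matrix.map_one _ (map_zero C) (map_one C), mul_one]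
  rw [Matrix.charpoly, key, Matrix.det_mul, Matrix.det_mul, mul_comm, ← mul_assoc, ← Matrix.det_mul,
    ← Matrix.map_mul, h2, Matrix.map_one _ (map_zero C) (map_one C), Matrix.det_one, one_mul]
  rfl

lemma charpoly_submatrix_rev {m : ℕ} (A : Matrix (Fin m) (Fin m) R) :
    (A.submatrix Fin.rev Fin.rev).charpoly = A.charpoly := by
  have : A.submatrix Fin.rev Fin.rev = Matrix.reindex Fin.revPerm Fin.revPerm A := by
    rw [Matrix.reindex_apply, Fin.revPerm_symm]; rfl
  rw [this, Matrix.charpoly_reindex]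
end Generic

section Flip
noncomputable def Xflip (m : ℕ) : Matrix (Fin m) (Fin m) ℂ :=
  fun i j => if j = Fin.rev i then Complex.I else 0

lemma Xflip_mul {m : ℕ} (M : Matrix (Fin m) (Fin m) ℂ) :
    Xflip m * M = Complex.I • M.submatrix Fin.rev id := by
  funext i j
  simp [Xflip, Matrix.mul_apply, ite_mul]

lemma mul_Xflip {m : ℕ} (M : Matrix (Fin m) (Fin m) ℂ) :
    M * Xflip m = Complex.I • M.submatrix id Fin.rev := by
  funext i j
  have h : ∀ k : Fin m, (j = Fin.rev k) ↔ (k = Fin.rev j) := by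
    intro k
    constructor
    · rintro rfl; rw [Fin.rev_rev]
    · rintro rfl; rw [Fin.rev_rev]
  simp only [Xflip, Matrix.mul_apply, mul_ite, mul_zero]
  simp_rw [h]
  simp [mul_comm]
end Flip

namespace S8
variable (m : ℕ) (t : ℕ → ℝ) (z : ℕ → ℂ)

noncomputable def A0 : Matrix (Fin m) (Fin m) ℂ :=
  fun i j => Hop m t z (Fin.castLE (by omega) i) (Fin.castLE (by omega) j)

noncomputable def B0 : Matrix (Fin m) (Fin m) ℂ :=
  fun i j => if (i:ℕ) = m - 1 ∧ (j:ℕ) = 0 then ((t m : ℝ) : ℂ) else 0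

noncomputable def C0 : Matrix (Fin m) (Fin m) ℂ :=
  fun i j => if (i:ℕ) = 0 ∧ (j:ℕ) = m - 1 then ((t m : ℝ) : ℂ) else 0

noncomputable def D0 : Matrix (Fin m) (Fin m) ℂ :=
  fun i j => Hop m t z ⟨m + i, by have := i.isLt; omega⟩ ⟨m + j, by have := j.isLt; omega⟩

def eqv : Fin m ⊕ Fin m ≃ Fin (2*m) := finSumFinEquiv.trans (finCongr (two_mul m).symm)

lemma hop_congr (a b a' b' : Fin (2*m)) (ha : (a:ℕ) = a') (hb : (b:ℕ) = b') :
    Hop m t z a b = Hop m t z a' b' := by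
  congr 1 <;> exact Fin.ext (by omega)

lemma blocks (hm : 1 ≤ m) :
    (Hop m t z).submatrix (eqv m) (eqv m) =
      Matrix.fromBlocks (A0 m t z) (B0 m t) (C0 m t) (D0 m t z) := by
  have hval : ∀ x : Fin m ⊕ Fin m,
      ((eqv m x : Fin (2*m)) : ℕ) = Sum.elim (fun i : Fin m => (i:ℕ)) (fun i : Fin m => m + i) x := by
    rintro (x | x) <;> simp [eqv] <;> omega
  funext i j
  rcases i with i | i <;> rcases j with j | j
  · show Hop m t z (eqv m (Sum.inl i)) (eqv m (Sum.inl j)) = A0 m t z i j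
    exact hop_congr m t z _ _ _ _ (hval (Sum.inl i)) (hval (Sum.inl j))
  · show Hop m t z (eqv m (Sum.inl i)) (eqv m (Sum.inr j)) = B0 m t i j
    rw [hop_congr m t z _ _ (Fin.castLE (by omega) i)
      ⟨m + (j:ℕ), by have := j.isLt; omega⟩ (hval (Sum.inl i)) (hval (Sum.inr j))]
    have hi := i.isLt; have hj := j.isLt
    simp only [Hop, B0, Fin.coe_castLE]
    rw [if_neg (by omega)]
    by_cases h : (i:ℕ) = m - 1 ∧ (j:ℕ) = 0
    · rw [if_pos (by omega), if_pos h]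
      norm_num
      congr 1
      omega
    · rw [if_neg (by omega), if_neg (by omega), if_neg h]
  · show Hop m t z (eqv m (Sum.inr i)) (eqv m (Sum.inl j)) = C0 m t i j
    rw [hop_congr m t z _ _ ⟨m + (i:ℕ), by have := i.isLt; omega⟩
      (Fin.castLE (by omega) j) (hval (Sum.inr i)) (hval (Sum.inl j))]
    have hi := i.isLt; have hj := j.isLt
    simp only [Hop, C0, Fin.coe_castLE]
    rw [if_neg (by omega), if_neg (by omega)]
    by_cases h : (i:ℕ) = 0 ∧ (j:ℕ) = m - 1
    · rw [if_pos (by omega), if_pos h]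
      norm_num
      congr 1
      omega
    · rw [if_neg (by omega), if_neg h]
  · show Hop m t z (eqv m (Sum.inr i)) (eqv m (Sum.inr j)) = D0 m t z i j
    exact hop_congr m t z _ _ _ _ (hval (Sum.inr i)) (hval (Sum.inr j))


lemma Hop_rev
    (htsym : ∀ j, 1 ≤ j → j ≤ 2*m - 1 → t j = t (2*m - j))
    (hzsym : ∀ j, 1 ≤ j → j ≤ 2*m → z (2*m + 1 - j) = (starRingEnd ℂ) (z j))
    (a b : Fin (2*m)) :
    Hop m t z (Fin.rev a) (Fin.rev b) = (starRingEnd ℂ) (Hop m t z a b) := by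
  have ha := a.isLt; have hb := b.isLt
  simp only [Hop, Fin.val_rev]
  by_cases h1 : (a:ℕ) = (b:ℕ)
  · rw [if_pos (by omega : 2*m - ((a:ℕ)+1) = 2*m - ((b:ℕ)+1)), if_pos h1]
    rw [show 2*m - ((a:ℕ)+1) + 1 = 2*m + 1 - ((a:ℕ)+1) by omega]
    exact hzsym _ (by omega) (by omega)
  · by_cases h2 : (a:ℕ) + 1 = (b:ℕ)
    · rw [if_neg (by omega), if_neg (by omega), if_pos (by omega), if_neg h1, if_pos h2]
      rw [show 2*m - ((b:ℕ)+1) + 1 = 2*m - ((a:ℕ)+1) by omega,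
        ← htsym _ (by omega) (by omega)]
      exact (Complex.conj_ofReal _).symm
    · by_cases h3 : (b:ℕ) + 1 = (a:ℕ)
      · rw [if_neg (by omega), if_pos (by omega), if_neg h1, if_neg h2, if_pos h3]
        rw [show 2*m - ((a:ℕ)+1) + 1 = 2*m - ((b:ℕ)+1) by omega,
          ← htsym _ (by omega) (by omega)]
        rw [show (b:ℕ) + 1 = (a:ℕ) from h3]
        exact (Complex.conj_ofReal _).symm
      · rw [if_neg (by omega), if_neg (by omega), if_neg (by omega), if_neg h1, if_neg h2,
          if_neg h3]
        simp

lemma D0_eq (hm : 1 ≤ m)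
    (htsym : ∀ j, 1 ≤ j → j ≤ 2*m - 1 → t j = t (2*m - j))
    (hzsym : ∀ j, 1 ≤ j → j ≤ 2*m → z (2*m + 1 - j) = (starRingEnd ℂ) (z j)) :
    D0 m t z = fun i j => (starRingEnd ℂ) (A0 m t z (Fin.rev i) (Fin.rev j)) := by
  funext i j
  have hi := i.isLt; have hj := j.isLt
  show Hop m t z _ _ = _
  rw [show (A0 m t z (Fin.rev i) (Fin.rev j)) =
      Hop m t z (Fin.castLE (by omega) (Fin.rev i)) (Fin.castLE (by omega) (Fin.rev j)) from rfl,
    ← Hop_rev m t z htsym hzsym]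
  apply hop_congr
  · simp [Fin.val_rev]; omega
  · simp [Fin.val_rev]; omega

lemma A0_im (hm : 1 ≤ m)
    (hzreal : ∀ j, 1 ≤ j → j ≤ 2*m → j ≠ m → j ≠ m + 1 → (z j).im = 0)
    (i j : Fin m) (h : ¬((i:ℕ) = m - 1 ∧ (j:ℕ) = m - 1)) :
    (A0 m t z i j).im = 0 := by
  have hi := i.isLt; have hj := j.isLt
  show (Hop m t z _ _).im = 0
  simp only [Hop, Fin.coe_castLE]
  by_cases h1 : (i:ℕ) = (j:ℕ)
  · rw [if_pos h1]
    exact hzreal _ (by omega) (by omega) (by omega) (by omega)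
  · rw [if_neg h1]
    by_cases h2 : (i:ℕ) + 1 = (j:ℕ)
    · rw [if_pos h2]; exact Complex.ofReal_im _
    · rw [if_neg h2]
      by_cases h3 : (j:ℕ) + 1 = (i:ℕ)
      · rw [if_pos h3]; exact Complex.ofReal_im _
      · rw [if_neg h3]; exact Complex.zero_im

lemma A0_corner (hm : 1 ≤ m) (i j : Fin m) (hij : (i:ℕ) = m - 1 ∧ (j:ℕ) = m - 1) :
    A0 m t z i j = z m := by
  show Hop m t z _ _ = z m
  simp only [Hop, Fin.coe_castLE]
  rw [if_pos (by omega)]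
  congr 1
  omega


lemma id1 (hm : 1 ≤ m) (hγ_eq : (z m).im = t m) :
    A0 m t z - B0 m t * Xflip m = HmR m t z := by
  have hzm : z m = (((z m).re : ℝ) : ℂ) + ((t m : ℝ) : ℂ) * Complex.I := by
    rw [← hγ_eq]; exact (Complex.re_add_im _).symm
  rw [mul_Xflip]
  funext i j
  have hi := i.isLt; have hj := j.isLt
  simp only [Matrix.sub_apply, Matrix.smul_apply, Matrix.submatrix_apply, smul_eq_mul, id_eq]
  simp only [B0, HmR, Fin.val_rev]
  by_cases h : (i:ℕ) = m - 1 ∧ (j:ℕ) = m - 1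
  · rw [if_pos (show (i:ℕ) = m - 1 ∧ m - ((j:ℕ)+1) = 0 from ⟨h.1, by omega⟩), if_pos h,
      A0_corner m t z hm i j h]
    linear_combination hzm
  · rw [if_neg (show ¬((i:ℕ) = m - 1 ∧ m - ((j:ℕ)+1) = 0) by omega), if_neg h]
    rw [mul_zero, sub_zero]
    rfl

lemma id2 (hm : 1 ≤ m)
    (htsym : ∀ j, 1 ≤ j → j ≤ 2*m - 1 → t j = t (2*m - j))
    (hzreal : ∀ j, 1 ≤ j → j ≤ 2*m → j ≠ m → j ≠ m + 1 → (z j).im = 0)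
    (hzsym : ∀ j, 1 ≤ j → j ≤ 2*m → z (2*m + 1 - j) = (starRingEnd ℂ) (z j))
    (hγ_eq : (z m).im = t m) :
    Xflip m * A0 m t z + C0 m t - Xflip m * B0 m t * Xflip m - D0 m t z * Xflip m = 0 := by
  have hzm : z m = (((z m).re : ℝ) : ℂ) + ((t m : ℝ) : ℂ) * Complex.I := by
    rw [← hγ_eq]; exact (Complex.re_add_im _).symm
  have hconj : (starRingEnd ℂ) (z m) = (((z m).re : ℝ) : ℂ) - ((t m : ℝ) : ℂ) * Complex.I := by
    apply Complex.ext <;> simp [hγ_eq]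
  rw [show D0 m t z = Matrix.of fun i j => (starRingEnd ℂ) (A0 m t z (Fin.rev i) (Fin.rev j)) from
    D0_eq m t z hm htsym hzsym]
  rw [Xflip_mul, Xflip_mul, Matrix.smul_mul, mul_Xflip, mul_Xflip]
  funext i j
  have hi := i.isLt; have hj := j.isLt
  simp only [Matrix.sub_apply, Matrix.add_apply, Matrix.smul_apply, Matrix.submatrix_apply,
    smul_eq_mul, id_eq, Matrix.zero_apply, Fin.rev_rev, Matrix.of_apply]
  by_cases h : (i:ℕ) = 0 ∧ (j:ℕ) = m - 1
  · have hc : A0 m t z (Fin.rev i) j = z m :=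
      A0_corner m t z hm _ _ ⟨by simp [Fin.val_rev]; omega, h.2⟩
    simp only [B0, C0, Fin.val_rev, hc]
    rw [if_pos h, if_pos (show m - ((i:ℕ)+1) = m - 1 ∧ m - ((j:ℕ)+1) = 0 by omega), hconj]
    linear_combination Complex.I * hzm + ((t m : ℝ) : ℂ) * Complex.I_sq
  · have hre : (starRingEnd ℂ) (A0 m t z (Fin.rev i) j) = A0 m t z (Fin.rev i) j :=
      Complex.conj_eq_iff_im.mpr (A0_im m t z hm hzreal _ _ (by simp [Fin.val_rev]; omega))
    simp only [B0, C0, Fin.val_rev, hre]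
    rw [if_neg h, if_neg (show ¬(m - ((i:ℕ)+1) = m - 1 ∧ m - ((j:ℕ)+1) = 0) by omega)]
    ring

lemma id3 (hm : 1 ≤ m)
    (htsym : ∀ j, 1 ≤ j → j ≤ 2*m - 1 → t j = t (2*m - j))
    (hzreal : ∀ j, 1 ≤ j → j ≤ 2*m → j ≠ m → j ≠ m + 1 → (z j).im = 0)
    (hzsym : ∀ j, 1 ≤ j → j ≤ 2*m → z (2*m + 1 - j) = (starRingEnd ℂ) (z j))
    (hγ_eq : (z m).im = t m) :
    Xflip m * B0 m t + D0 m t z = (HmR m t z).submatrix Fin.rev Fin.rev := by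
  have hzm : z m = (((z m).re : ℝ) : ℂ) + ((t m : ℝ) : ℂ) * Complex.I := by
    rw [← hγ_eq]; exact (Complex.re_add_im _).symm
  have hconj : (starRingEnd ℂ) (z m) = (((z m).re : ℝ) : ℂ) - ((t m : ℝ) : ℂ) * Complex.I := by
    apply Complex.ext <;> simp [hγ_eq]
  rw [show D0 m t z = Matrix.of fun i j => (starRingEnd ℂ) (A0 m t z (Fin.rev i) (Fin.rev j)) from
    D0_eq m t z hm htsym hzsym, Xflip_mul]
  funext i j
  have hi := i.isLt; have hj := j.isLt
  simp only [Matrix.add_apply, Matrix.smul_apply, Matrix.submatrix_apply, smul_eq_mul, id_eq,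
    Matrix.of_apply]
  by_cases h : (i:ℕ) = 0 ∧ (j:ℕ) = 0
  · have hc : A0 m t z (Fin.rev i) (Fin.rev j) = z m :=
      A0_corner m t z hm _ _ ⟨by simp [Fin.val_rev]; omega, by simp [Fin.val_rev]; omega⟩
    simp only [B0, HmR, Fin.val_rev, hc]
    rw [if_pos (show m - ((i:ℕ)+1) = m - 1 ∧ (j:ℕ) = 0 from ⟨by omega, h.2⟩),
      if_pos (show m - ((i:ℕ)+1) = m - 1 ∧ m - ((j:ℕ)+1) = m - 1 by omega), hconj]
    ring
  · have hre : (starRingEnd ℂ) (A0 m t z (Fin.rev i) (Fin.rev j)) =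
        A0 m t z (Fin.rev i) (Fin.rev j) :=
      Complex.conj_eq_iff_im.mpr (A0_im m t z hm hzreal _ _ (by simp [Fin.val_rev]; omega))
    simp only [B0, HmR, Fin.val_rev, hre]
    rw [if_neg (show ¬(m - ((i:ℕ)+1) = m - 1 ∧ (j:ℕ) = 0) by omega),
      if_neg (show ¬(m - ((i:ℕ)+1) = m - 1 ∧ m - ((j:ℕ)+1) = m - 1) by omega)]
    rw [mul_zero, zero_add]
    rfl

lemma key (hm : 1 ≤ m)
    (htsym : ∀ j, 1 ≤ j → j ≤ 2*m - 1 → t j = t (2*m - j))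
    (hzreal : ∀ j, 1 ≤ j → j ≤ 2*m → j ≠ m → j ≠ m + 1 → (z j).im = 0)
    (hzsym : ∀ j, 1 ≤ j → j ≤ 2*m → z (2*m + 1 - j) = (starRingEnd ℂ) (z j))
    (hγ_eq : (z m).im = t m) :
    (Hop m t z).charpoly = (HmR m t z).charpoly ^ 2 := by
  classical
  set X := Xflip m with hX
  set S : Matrix (Fin m ⊕ Fin m) (Fin m ⊕ Fin m) ℂ := Matrix.fromBlocks 1 0 X 1 with hS
  set S' : Matrix (Fin m ⊕ Fin m) (Fin m ⊕ Fin m) ℂ := Matrix.fromBlocks 1 0 (-X) 1 with hS'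
  have hSS' : S * S' = 1 := by
    rw [hS, hS', Matrix.fromBlocks_multiply]
    simp [← Matrix.fromBlocks_one]
  have hS'S : S' * S = 1 := by
    rw [hS, hS', Matrix.fromBlocks_multiply]
    simp [← Matrix.fromBlocks_one]
  have hmain : S * ((Hop m t z).submatrix (eqv m) (eqv m)) * S' =
      Matrix.fromBlocks (HmR m t z) (B0 m t) 0 ((HmR m t z).submatrix Fin.rev Fin.rev) := by
    rw [blocks m t z hm, hS, hS', Matrix.fromBlocks_multiply, Matrix.fromBlocks_multiply]
    have e1 : A0 m t z + -(B0 m t * X) = HmR m t z := by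
      rw [← sub_eq_add_neg]; exact id1 m t z hm hγ_eq
    have e3 : X * A0 m t z + C0 m t + -((X * B0 m t + D0 m t z) * X) = 0 := by
      rw [Matrix.add_mul, ← sub_eq_add_neg, sub_add_eq_sub_sub]
      exact id2 m t z hm htsym hzreal hzsym hγ_eq
    have e4 : X * B0 m t + D0 m t z = (HmR m t z).submatrix Fin.rev Fin.rev :=
      id3 m t z hm htsym hzreal hzsym hγ_eq
    simp only [Matrix.one_mul, Matrix.zero_mul, Matrix.mul_one, Matrix.mul_zero, add_zero,
      zero_add, Matrix.mul_neg]
    rw [e1, e3, e4]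
  have h0 : ((Hop m t z).submatrix (eqv m) (eqv m)).charpoly = (Hop m t z).charpoly := by
    rw [show (Hop m t z).submatrix (eqv m) (eqv m)
        = Matrix.reindex (eqv m).symm (eqv m).symm (Hop m t z) by
      rw [Matrix.reindex_apply]; simp]
    exact Matrix.charpoly_reindex _ _
  rw [← h0, ← charpoly_conj' S _ S' hSS' hS'S, hmain, Matrix.charpoly_fromBlocks_zero₂₁,
    charpoly_submatrix_rev, sq]

end S8


theorem stmt8 (m : ℕ) (hm : 1 ≤ m) (t : ℕ → ℝ) (z : ℕ → ℂ)
    (ht0 : ∀ j, 1 ≤ j → j ≤ 2*m - 1 → t j ≠ 0)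
    (htsym : ∀ j, 1 ≤ j → j ≤ 2*m - 1 → t j = t (2*m - j))
    (htm : 0 < t m)
    (hzreal : ∀ j, 1 ≤ j → j ≤ 2*m → j ≠ m → j ≠ m + 1 → (z j).im = 0)
    (hzsym : ∀ j, 1 ≤ j → j ≤ 2*m → z (2*m + 1 - j) = (starRingEnd ℂ) (z j))
    (hγ : 0 ≤ (z m).im)
    (hγ_eq : (z m).im = t m) :
    (Hop m t z).charpoly = (HmR m t z).charpoly ^ 2 ∧
      (∃ q : Polynomial ℝ, q.Monic ∧ q.natDegree = m ∧
        (Hop m t z).charpoly = (q.map (algebraMap ℝ ℂ)) ^ 2) ∧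
      (∀ μ ∈ spectrum ℂ (Hop m t z),
        μ.im = 0 ∧ 2 ≤ (Hop m t z).charpoly.rootMultiplicity μ) := by
  classical
  have keyEq := S8.key m t z hm htsym hzreal hzsym hγ_eq
  -- entries of HmR are real
  have him : ∀ i j, (HmR m t z i j).im = 0 := by
    intro i j
    by_cases h : (i:ℕ) = m - 1 ∧ (j:ℕ) = m - 1
    · simp [HmR, h]
    · have h2 := S8.A0_im m t z hm hzreal i j h
      simp only [HmR]
      rw [if_neg h]
      exact h2
  set Q : Matrix (Fin m) (Fin m) ℝ := fun i j => (HmR m t z i j).re with hQdef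
  have hQmap : HmR m t z = Q.map (algebraMap ℝ ℂ) := by
    funext i j
    simp only [hQdef, Matrix.map_apply]
    apply Complex.ext
    · exact (Complex.ofReal_re _).symm
    · exact (him i j).trans (Complex.ofReal_im _).symm
  have hq2 : (Hop m t z).charpoly = (Q.charpoly.map (algebraMap ℝ ℂ)) ^ 2 := by
    rw [keyEq, hQmap, Matrix.charpoly_map]
  -- symmetry of Hop
  have hsym : ∀ a b : Fin (2*m), Hop m t z a b = Hop m t z b a := by
    intro a b
    simp only [Hop]
    by_cases h1 : (a:ℕ) = (b:ℕ)
    · rw [if_pos h1, if_pos h1.symm, h1]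
    · rw [if_neg h1, if_neg (Ne.symm h1)]
      by_cases h2 : (a:ℕ) + 1 = (b:ℕ)
      · rw [if_pos h2, if_neg (by omega), if_pos h2]
      · by_cases h3 : (b:ℕ) + 1 = (a:ℕ)
        · rw [if_neg h2, if_pos h3, if_pos h3]
        · rw [if_neg h2, if_neg h3, if_neg h3, if_neg h2]
  have hsymm' : ∀ i j : Fin m, HmR m t z j i = HmR m t z i j := by
    intro i j
    simp only [HmR]
    by_cases h : (i:ℕ) = m - 1 ∧ (j:ℕ) = m - 1
    · rw [if_pos ⟨h.2, h.1⟩, if_pos h]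
    · rw [if_neg (fun hc => h ⟨hc.2, hc.1⟩), if_neg h]
      exact hsym _ _
  have hherm : (HmR m t z).IsHermitian := by
    funext i j
    rw [Matrix.conjTranspose_apply]
    show (starRingEnd ℂ) (HmR m t z j i) = HmR m t z i j
    rw [Complex.conj_eq_iff_im.mpr (him j i)]
    exact hsymm' i j
  refine ⟨keyEq, ⟨Q.charpoly, Matrix.charpoly_monic _, by simp, hq2⟩, ?_⟩
  intro μ hμ
  have hroot : (Hop m t z).charpoly.IsRoot μ := (mem_spectrum_iff_root' _ _).mp hμ
  have hroot2 : (HmR m t z).charpoly.IsRoot μ := by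
    have := hroot
    rw [keyEq, Polynomial.IsRoot.def, Polynomial.eval_pow,
      pow_eq_zero_iff (two_ne_zero)] at this
    exact this
  have hp0 : (HmR m t z).charpoly ≠ 0 := (Matrix.charpoly_monic _).ne_zero
  constructor
  · have hspec : μ ∈ spectrum ℂ (HmR m t z) := (mem_spectrum_iff_root' _ _).mpr hroot2
    have hspec2 : μ ∈ spectrum ℂ (Matrix.toEuclideanLin (HmR m t z)) := by
      rw [Matrix.spectrum_toEuclideanLin (A := HmR m t z)]; exact hspec
    have heig : Module.End.HasEigenvalue (Matrix.toEuclideanLin (HmR m t z)) μ :=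
      Module.End.hasEigenvalue_iff_mem_spectrum.mpr hspec2
    have hsl := Matrix.isHermitian_iff_isSymmetric.mp hherm
    have hconj := hsl.conj_eigenvalue_eq_self heig
    exact Complex.conj_eq_iff_im.mp hconj
  · rw [keyEq, sq, Polynomial.rootMultiplicity_mul (mul_ne_zero hp0 hp0)]
    have h1 : 0 < (HmR m t z).charpoly.rootMultiplicity μ :=
      (Polynomial.rootMultiplicity_pos hp0).mpr hroot2
    omega
end

section
/- For all x ∈ ℂ, det(2x·1_n − H/t) = U_n(x) − ((z_m + z_{m̄})/t)·U_{n−m}(x)·U_{m−1}(x) + (z_m z_{m̄}/t²)·U_{n−2m}(x)·U_{m−1}(x)². -/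
open Matrix Complex Polynomial

/-- The uniform `n`-site open chain with hopping `t` and defect potentials
`zm` at site `m` and `zmb` at the mirror site `m̄ = n+1−m` (1-based sites). -/
noncomputable def Hu (n m : ℕ) (t : ℝ) (zm zmb : ℂ) : Matrix (Fin n) (Fin n) ℂ :=
  fun i j =>
    if (i : ℕ) = (j : ℕ) then
      (if (i : ℕ) + 1 = m then zm else if (i : ℕ) + 1 = n + 1 - m then zmb else 0)
    else if (i : ℕ) + 1 = (j : ℕ) ∨ (j : ℕ) + 1 = (i : ℕ) then (t : ℂ)
    else 0

noncomputable def Tmat (d : ℕ → ℂ) (k : ℕ) : Matrix (Fin k) (Fin k) ℂ :=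
  fun i j => if (i : ℕ) = (j : ℕ) then d i
    else if (i : ℕ) + 1 = (j : ℕ) ∨ (j : ℕ) + 1 = (i : ℕ) then -1 else 0

lemma Tmat_succ (d : ℕ → ℂ) (k : ℕ) :
    (Tmat d (k+1)).submatrix Fin.succ Fin.succ = Tmat (fun i => d (i+1)) k := by
  ext i j
  simp only [Tmat, submatrix_apply, Fin.val_succ]
  rcases eq_or_ne (i : ℕ) (j : ℕ) with h | h
  · simp [h]
  · have h1 : ¬ ((i:ℕ)+1 = (j:ℕ)+1) := by omega
    have h2 : ((i:ℕ)+1+1 = (j:ℕ)+1 ∨ (j:ℕ)+1+1 = (i:ℕ)+1) ↔ ((i:ℕ)+1 = (j:ℕ) ∨ (j:ℕ)+1 = (i:ℕ)) := by omega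
    simp [h1, h, h2]

lemma det_T_rec (d : ℕ → ℂ) (k : ℕ) :
    (Tmat d (k+2)).det = d 0 * (Tmat (fun i => d (i+1)) (k+1)).det
      - (Tmat (fun i => d (i+2)) k).det := by
  rw [Matrix.det_succ_row_zero]
  rw [Fin.sum_univ_succ, Fin.sum_univ_succ]
  have hrest : ∀ j : Fin k, Tmat d (k+2) 0 (Fin.succ (Fin.succ j)) = 0 := by
    intro j
    simp only [Tmat, Fin.val_zero, Fin.val_succ]
    have h1 : ¬ ((0:ℕ) = (j:ℕ)+1+1) := by omega
    have h2 : ¬ ((0:ℕ)+1 = (j:ℕ)+1+1 ∨ (j:ℕ)+1+1+1 = 0) := by omega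
    simp [h1, h2]
  have hzero : ∑ j : Fin k, (-1 : ℂ) ^ ((Fin.succ (Fin.succ j) : Fin (k+2)) : ℕ) *
      Tmat d (k+2) 0 (Fin.succ (Fin.succ j)) *
      ((Tmat d (k+2)).submatrix Fin.succ (Fin.succ (Fin.succ j)).succAbove).det = 0 := by
    apply Finset.sum_eq_zero; intro j _; rw [hrest]; ring
  rw [hzero, add_zero]
  have h00 : Tmat d (k+2) 0 0 = d 0 := by simp [Tmat]
  have h01 : Tmat d (k+2) 0 (Fin.succ 0) = -1 := by
    simp only [Tmat, Fin.val_zero, Fin.val_succ]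
    norm_num
  have hsub0 : (0 : Fin (k+2)).succAbove = Fin.succ := Fin.succAbove_zero
  rw [h00, h01, hsub0, Tmat_succ]
  -- now the j=1 minor
  have hN : ((Tmat d (k+2)).submatrix Fin.succ (Fin.succ (0 : Fin (k+1))).succAbove).det
      = - (Tmat (fun i => d (i+2)) k).det := by
    set N := (Tmat d (k+2)).submatrix Fin.succ (Fin.succ (0 : Fin (k+1))).succAbove with hNdef
    rw [Matrix.det_succ_column_zero, Fin.sum_univ_succ]
    have hN00 : N 0 0 = -1 := by
      simp only [hNdef, submatrix_apply]
      have : (Fin.succ (0 : Fin (k+1))).succAbove 0 = 0 := rfl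
      rw [this]
      simp only [Tmat, Fin.val_succ, Fin.val_zero]
      norm_num
    have hNi0 : ∀ i : Fin k, N (Fin.succ i) 0 = 0 := by
      intro i
      simp only [hNdef, submatrix_apply]
      have : (Fin.succ (0 : Fin (k+1))).succAbove 0 = 0 := rfl
      rw [this]
      simp only [Tmat, Fin.val_succ, Fin.val_zero]
      have h1 : ¬ ((i:ℕ)+1+1 = 0) := by omega
      have h2 : ¬ ((i:ℕ)+1+1+1 = 0 ∨ (0:ℕ)+1 = (i:ℕ)+1+1) := by omega
      simp [h1, h2]
    have hz : ∑ i : Fin k, (-1:ℂ) ^ ((Fin.succ i : Fin (k+1)) : ℕ) * N (Fin.succ i) 0 *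
        (N.submatrix (Fin.succ i).succAbove Fin.succ).det = 0 := by
      apply Finset.sum_eq_zero; intro i _; rw [hNi0]; ring
    rw [hz, add_zero, hN00]
    have hsubmain : N.submatrix (0 : Fin (k+1)).succAbove Fin.succ
        = Tmat (fun i => d (i+2)) k := by
      rw [Fin.succAbove_zero]
      have hcol : ∀ j : Fin k, (Fin.succ (0 : Fin (k+1))).succAbove (Fin.succ j) = Fin.succ (Fin.succ j) := by
        intro j
        rw [Fin.succAbove_of_le_castSucc]
        simp [Fin.le_def]
      have : N.submatrix Fin.succ Fin.succ
          = ((Tmat d (k+2)).submatrix Fin.succ Fin.succ).submatrix Fin.succ Fin.succ := by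
        ext i j
        simp only [hNdef, submatrix_apply, hcol]
      rw [this, Tmat_succ, Tmat_succ]
    rw [hsubmain]
    simp
  rw [hN]
  simp only [Fin.val_zero, Fin.val_succ, pow_zero, pow_one]
  ring

noncomputable def uu (x : ℂ) (i : ℤ) : ℂ := (Polynomial.Chebyshev.U ℂ i).eval x

lemma uu_zero (x : ℂ) : uu x 0 = 1 := by simp [uu]
lemma uu_one (x : ℂ) : uu x 1 = 2*x := by simp [uu, Polynomial.Chebyshev.U_one]
lemma uu_rec (x : ℂ) (i : ℤ) : uu x (i+2) = 2*x*uu x (i+1) - uu x i := by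
  simp [uu, Polynomial.Chebyshev.U_add_two]
lemma uu_rec' (x : ℂ) (j : ℕ) : uu x ((j:ℤ)+2) = 2*x*uu x ((j:ℤ)+1) - uu x j := uu_rec x j

lemma Tmat_congr (d d' : ℕ → ℂ) (k : ℕ) (h : ∀ i, i < k → d i = d' i) :
    Tmat d k = Tmat d' k := by
  ext i j
  simp only [Tmat]
  rcases eq_or_ne (i:ℕ) (j:ℕ) with hh | hh
  · simp [hh, hh ▸ h i i.isLt]
  · simp [hh]

lemma det_const (x : ℂ) : ∀ k, (Tmat (fun _ => 2*x) k).det = uu x k := by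
  intro k
  induction k using Nat.strong_induction_on with
  | _ k ih =>
    match k with
    | 0 => simp [Matrix.det_fin_zero, uu_zero]
    | 1 => simp [Matrix.det_fin_one, Tmat, uu_one]
    | (j+2) =>
      rw [det_T_rec, ih (j+1) (by omega), ih j (by omega)]
      push_cast
      rw [uu_rec' x j]

noncomputable def ds (x c : ℂ) (r : ℕ) : ℕ → ℂ := fun i => if i = r then 2*x - c else 2*x

lemma det_single (x c : ℂ) : ∀ k r, r < k → (Tmat (ds x c r) k).det
    = uu x k - c * uu x r * uu x ((k:ℤ) - 1 - r) := by
  intro k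
  induction k using Nat.strong_induction_on with
  | _ k ih =>
    match k with
    | 0 => intro r hr; omega
    | 1 =>
      intro r hr
      interval_cases r
      simp [Matrix.det_fin_one, Tmat, ds, uu_zero, uu_one]
    | (j+2) =>
      intro r hr
      rw [det_T_rec]
      match r with
      | 0 =>
        have e1 : Tmat (fun i => ds x c 0 (i+1)) (j+1) = Tmat (fun _ => 2*x) (j+1) :=
          Tmat_congr _ _ _ (by intro i _; simp [ds])
        have e2 : Tmat (fun i => ds x c 0 (i+2)) j = Tmat (fun _ => 2*x) j :=
          Tmat_congr _ _ _ (by intro i _; simp [ds])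
        rw [e1, e2, det_const, det_const]
        have h0 : ds x c 0 0 = 2*x - c := by simp [ds]
        rw [h0]
        push_cast
        rw [uu_rec' x j, uu_zero]
        ring_nf
      | 1 =>
        have e1 : Tmat (fun i => ds x c 1 (i+1)) (j+1) = Tmat (ds x c 0) (j+1) :=
          Tmat_congr _ _ _ (by intro i _; simp [ds])
        have e2 : Tmat (fun i => ds x c 1 (i+2)) j = Tmat (fun _ => 2*x) j :=
          Tmat_congr _ _ _ (by intro i _; simp [ds])
        rw [e1, e2, det_const, ih (j+1) (by omega) 0 (by omega)]
        have h0 : ds x c 1 0 = 2*x := by simp [ds]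
        rw [h0]
        push_cast
        rw [uu_rec' x j, uu_zero, uu_one]
        ring_nf
      | (p+2) =>
        have e1 : Tmat (fun i => ds x c (p+2) (i+1)) (j+1) = Tmat (ds x c (p+1)) (j+1) :=
          Tmat_congr _ _ _ (by intro i _; simp [ds])
        have e2 : Tmat (fun i => ds x c (p+2) (i+2)) j = Tmat (ds x c p) j :=
          Tmat_congr _ _ _ (by intro i _; simp [ds])
        rw [e1, e2, ih (j+1) (by omega) (p+1) (by omega), ih j (by omega) p (by omega)]
        have h0 : ds x c (p+2) 0 = 2*x := by simp [ds]
        rw [h0]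
        push_cast
        rw [uu_rec' x j, uu_rec' x p]
        ring_nf

noncomputable def dd (x c1 c2 : ℂ) (r s : ℕ) : ℕ → ℂ :=
  fun i => if i = r then 2*x - c1 else if i = s then 2*x - c2 else 2*x

lemma det_double (x c1 c2 : ℂ) : ∀ k r s, r < s → s < k → (Tmat (dd x c1 c2 r s) k).det
    = uu x k - c1 * uu x r * uu x ((k:ℤ) - 1 - r) - c2 * uu x s * uu x ((k:ℤ) - 1 - s)
      + c1 * c2 * uu x r * uu x ((s:ℤ) - 1 - r) * uu x ((k:ℤ) - 1 - s) := by
  intro k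
  induction k using Nat.strong_induction_on with
  | _ k ih =>
    match k with
    | 0 => intro r s hrs hsk; omega
    | 1 => intro r s hrs hsk; omega
    | (j+2) =>
      intro r s hrs hsk
      rw [det_T_rec]
      match r, s with
      | _, 0 => omega
      | p+1, 1 => omega
      | 0, 1 =>
        have e1 : Tmat (fun i => dd x c1 c2 0 1 (i+1)) (j+1) = Tmat (ds x c2 0) (j+1) :=
          Tmat_congr _ _ _ (by intro i _; simp [dd, ds])
        have e2 : Tmat (fun i => dd x c1 c2 0 1 (i+2)) j = Tmat (fun _ => 2*x) j :=
          Tmat_congr _ _ _ (by intro i _; simp [dd])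
        rw [e1, e2, det_const, det_single x c2 (j+1) 0 (by omega)]
        have h0 : dd x c1 c2 0 1 0 = 2*x - c1 := by simp [dd]
        rw [h0]
        push_cast
        rw [uu_rec' x j, uu_zero, uu_one]
        ring_nf
      | 0, q+2 =>
        have e1 : Tmat (fun i => dd x c1 c2 0 (q+2) (i+1)) (j+1) = Tmat (ds x c2 (q+1)) (j+1) :=
          Tmat_congr _ _ _ (by intro i _; simp [dd, ds])
        have e2 : Tmat (fun i => dd x c1 c2 0 (q+2) (i+2)) j = Tmat (ds x c2 q) j :=
          Tmat_congr _ _ _ (by intro i _; simp [dd, ds])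
        rw [e1, e2, det_single x c2 (j+1) (q+1) (by omega), det_single x c2 j q (by omega)]
        have h0 : dd x c1 c2 0 (q+2) 0 = 2*x - c1 := by simp [dd]
        rw [h0]
        push_cast
        rw [uu_rec' x j, uu_rec' x q, uu_zero]
        ring_nf
      | 1, q+2 =>
        have e1 : Tmat (fun i => dd x c1 c2 1 (q+2) (i+1)) (j+1) = Tmat (dd x c1 c2 0 (q+1)) (j+1) :=
          Tmat_congr _ _ _ (by intro i _; simp [dd])
        have e2 : Tmat (fun i => dd x c1 c2 1 (q+2) (i+2)) j = Tmat (ds x c2 q) j :=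
          Tmat_congr _ _ _ (by intro i _; simp [dd, ds])
        rw [e1, e2, ih (j+1) (by omega) 0 (q+1) (by omega) (by omega),
          det_single x c2 j q (by omega)]
        have h0 : dd x c1 c2 1 (q+2) 0 = 2*x := by simp [dd]
        rw [h0]
        push_cast
        rw [uu_rec' x j, uu_rec' x q, uu_zero, uu_one]
        ring_nf
      | p+2, q+2 =>
        have e1 : Tmat (fun i => dd x c1 c2 (p+2) (q+2) (i+1)) (j+1)
            = Tmat (dd x c1 c2 (p+1) (q+1)) (j+1) :=
          Tmat_congr _ _ _ (by intro i _; simp [dd])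
        have e2 : Tmat (fun i => dd x c1 c2 (p+2) (q+2) (i+2)) j = Tmat (dd x c1 c2 p q) j :=
          Tmat_congr _ _ _ (by intro i _; simp [dd])
        rw [e1, e2, ih (j+1) (by omega) (p+1) (q+1) (by omega) (by omega),
          ih j (by omega) p q (by omega) (by omega)]
        have h0 : dd x c1 c2 (p+2) (q+2) 0 = 2*x := by simp [dd]
        rw [h0]
        push_cast
        rw [uu_rec' x j, uu_rec' x p, uu_rec' x q]
        ring_nf

theorem stmt11 (n m : ℕ) (hn : 2 ≤ n) (hm : 1 ≤ m) (hmn : 2*m ≤ n)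
    (t : ℝ) (ht : 0 < t) (zm zmb : ℂ) :
    ∀ x : ℂ,
      Matrix.det ((2*x) • (1 : Matrix (Fin n) (Fin n) ℂ) - (t : ℂ)⁻¹ • Hu n m t zm zmb) =
        (Chebyshev.U ℂ (n : ℤ)).eval x
          - ((zm + zmb) / (t : ℂ)) * (Chebyshev.U ℂ ((n : ℤ) - (m : ℤ))).eval x
              * (Chebyshev.U ℂ ((m : ℤ) - 1)).eval x
          + (zm * zmb / (t : ℂ)^2) * (Chebyshev.U ℂ ((n : ℤ) - 2*(m : ℤ))).eval x
              * ((Chebyshev.U ℂ ((m : ℤ) - 1)).eval x)^2 := by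
  intro x
  have tne : (t : ℂ) ≠ 0 := by
    exact_mod_cast ne_of_gt ht
  have hmat : (2*x) • (1 : Matrix (Fin n) (Fin n) ℂ) - (t : ℂ)⁻¹ • Hu n m t zm zmb
      = Tmat (dd x (zm/t) (zmb/t) (m-1) (n-m)) n := by
    ext i j
    simp only [Matrix.sub_apply, Matrix.smul_apply, Hu, Tmat, dd, smul_eq_mul]
    by_cases hij : (i:ℕ) = (j:ℕ)
    · have hijf : i = j := Fin.ext hij
      subst hijf
      rw [Matrix.one_apply_eq, if_pos rfl, if_pos rfl]
      by_cases h1 : (i:ℕ)+1 = m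
      · have h1' : (i:ℕ) = m-1 := by omega
        rw [if_pos h1, if_pos h1']
        field_simp
      · by_cases h2 : (i:ℕ)+1 = n+1-m
        · have h2' : (i:ℕ) = n-m := by omega
          have h2'' : ¬ ((i:ℕ) = m-1) := by omega
          rw [if_neg h1, if_pos h2, if_neg h2'', if_pos h2']
          field_simp
        · have h1' : ¬ ((i:ℕ) = m-1) := by omega
          have h2' : ¬ ((i:ℕ) = n-m) := by omega
          rw [if_neg h1, if_neg h2, if_neg h1', if_neg h2']
          ring
    · have hijf : ¬ (i = j) := fun h => hij (by rw [h])
      rw [Matrix.one_apply_ne hijf, if_neg hij, if_neg hij]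
      by_cases hadj : (i:ℕ)+1 = (j:ℕ) ∨ (j:ℕ)+1 = (i:ℕ)
      · rw [if_pos hadj, if_pos hadj]
        field_simp
        ring
      · rw [if_neg hadj, if_neg hadj]
        ring
  rw [hmat, det_double x (zm/t) (zmb/t) n (m-1) (n-m) (by omega) (by omega)]
  have c1 : ((m-1:ℕ):ℤ) = (m:ℤ)-1 := by omega
  have c2 : ((n-m:ℕ):ℤ) = (n:ℤ)-(m:ℤ) := by omega
  rw [c1, c2]
  simp only [uu]
  ring_nf
end
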